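/- arXiv:1302.3940 — 5 statements merged into one kernel-verified Lean document; each statement's English description precedes it below -/
import Mathlib

section
/- For every n ≥ 1, the block 0^n is stable; the block 1^n is stable if and only if n ∈ I; and the block 2^n is stable if and only if n ∉ I. -/
open Set Function

/-- The map `x ↦ σᵐ(x)` on the full shift `A^ℤ`, where `σᵐ(x)_i = x_{i+m}`. -/
def shiftZ (A : Type*) (m : ℤ) : (ℤ → A) → ℤ → A := fun x i => x (i + m)

/-- The shift map `σ` on the full shift `A^ℤ`: `σ(x)_i = x_{i+1}`. -/
abbrev shiftMap (A : Type*) : (ℤ → A) → ℤ → A := shiftZ A 1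

/-- The inverse shift map `σ⁻¹`: `σ⁻¹(x)_i = x_{i-1}`. -/
abbrev shiftInv (A : Type*) : (ℤ → A) → ℤ → A := shiftZ A (-1)

/-- The reversal map `ρ`: `ρ(x)_i = x_{-i}`. -/
def revMap (A : Type*) : (ℤ → A) → ℤ → A := fun x i => x (-i)

/-- A shift space over `A`: a nonempty closed subset of `A^ℤ` with `σ(X) = X`. -/
def IsShiftSpace {A : Type*} [TopologicalSpace A] (X : Set (ℤ → A)) : Prop :=
  X.Nonempty ∧ IsClosed X ∧ shiftMap A '' X = X

/-- The word `w` occurs in `x` at position `i`, i.e. `x_{[i, i+|w|-1]} = w`. -/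
def OccursAt {A : Type*} (w : List A) (x : ℤ → A) (i : ℤ) : Prop :=
  ∀ k : Fin w.length, x (i + (k : ℕ)) = w.get k

/-- `w` is a block of `X`: it occurs in some point of `X`. -/
def IsBlockOf {A : Type*} (X : Set (ℤ → A)) (w : List A) : Prop :=
  ∃ x ∈ X, ∃ i : ℤ, OccursAt w x i

/-- `X` is irreducible: any two blocks can be joined by a block. -/
def ShiftIrreducible {A : Type*} (X : Set (ℤ → A)) : Prop :=
  ∀ u v : List A, IsBlockOf X u → IsBlockOf X v → ∃ w : List A, IsBlockOf X (u ++ w ++ v)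

/-- `w` is a finitary (intrinsically synchronizing) block of `X`. -/
def IsFinitary {A : Type*} (X : Set (ℤ → A)) (w : List A) : Prop :=
  IsBlockOf X w ∧ ∀ u v : List A, IsBlockOf X (u ++ w) → IsBlockOf X (w ++ v) →
    IsBlockOf X (u ++ w ++ v)

/-- A synchronized system: an irreducible shift space with a finitary block. -/
def IsSynchronized {A : Type*} [TopologicalSpace A] (X : Set (ℤ → A)) : Prop :=
  IsShiftSpace X ∧ ShiftIrreducible X ∧ ∃ w : List A, IsFinitary X w

/-- `φ` (as a map of the ambient full shift) restricts to a flip for `(X, σ_X)`: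
a homeomorphism `X → X` with `φ ∘ φ = id` and `φ ∘ σ_X = σ_X⁻¹ ∘ φ`.
(Being a homeomorphism is automatic from continuity and `φ ∘ φ = id` on `X`.) -/
def IsFlip {A : Type*} [TopologicalSpace A] (X : Set (ℤ → A))
    (φ : (ℤ → A) → ℤ → A) : Prop :=
  MapsTo φ X X ∧ ContinuousOn φ X ∧ (∀ x ∈ X, φ (φ x) = x) ∧
    ∀ x ∈ X, φ (shiftMap A x) = shiftInv A (φ x)

/-- The shift-flip systems `(X, σ_X, φ)` and `(Y, σ_Y, ψ)` are conjugate: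
there is a homeomorphism `Φ : X → Y` with `Φ ∘ σ_X = σ_Y ∘ Φ` and `Φ ∘ φ = ψ ∘ Φ`. -/
def SystemConj {A B : Type*} [TopologicalSpace A] [TopologicalSpace B]
    (X : Set (ℤ → A)) (φ : (ℤ → A) → ℤ → A)
    (Y : Set (ℤ → B)) (ψ : (ℤ → B) → ℤ → B) : Prop :=
  ∃ (Φ : (ℤ → A) → ℤ → B) (Ψ : (ℤ → B) → ℤ → A),
    MapsTo Φ X Y ∧ ContinuousOn Φ X ∧ MapsTo Ψ Y X ∧ ContinuousOn Ψ Y ∧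
    InvOn Ψ Φ X Y ∧
    (∀ x ∈ X, Φ (shiftMap A x) = shiftMap B (Φ x)) ∧ ∀ x ∈ X, Φ (φ x) = ψ (Φ x)

/-- Two flips `φ, φ'` for `(X, σ_X)` are conjugate. -/
def FlipConj {A : Type*} [TopologicalSpace A] (X : Set (ℤ → A))
    (φ φ' : (ℤ → A) → ℤ → A) : Prop :=
  SystemConj X φ X φ'

/-- `F(φ; n) = {x ∈ X : σ_X^n(x) = x and φ(x) = x}`. -/
def flipFix {A : Type*} (X : Set (ℤ → A)) (φ : (ℤ → A) → ℤ → A) (n : ℕ) :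
    Set (ℤ → A) :=
  {x ∈ X | (shiftMap A)^[n] x = x ∧ φ x = x}

/-- `A(φ)`: points of `X` in which some finitary block occurs infinitely often and
which differ from their `φ`-image in at least one but only finitely many coordinates. -/
def flipAsym {A : Type*} (X : Set (ℤ → A)) (φ : (ℤ → A) → ℤ → A) :
    Set (ℤ → A) :=
  {x ∈ X | (∃ w : List A, IsFinitary X w ∧ {i : ℤ | OccursAt w x i}.Infinite) ∧
    {i : ℤ | φ x i ≠ x i}.Nonempty ∧ {i : ℤ | φ x i ≠ x i}.Finite}

/-- `x` is a bi-infinite concatenation of words from `C`. -/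
def IsConcat {A : Type*} (C : Set (List A)) (x : ℤ → A) : Prop :=
  ∃ t : ℤ → ℤ, StrictMono t ∧ (∀ n : ℤ, ∃ j : ℤ, t j ≤ n ∧ n < t (j + 1)) ∧
    ∀ j : ℤ, ∃ w ∈ C, t (j + 1) = t j + w.length ∧ OccursAt w x (t j)

/-- A coded system: a shift space in which the set of bi-infinite concatenations of
words from some code `C` is dense. -/
def IsCoded {A : Type*} [TopologicalSpace A] (X : Set (ℤ → A)) : Prop :=
  IsShiftSpace X ∧ ∃ C : Set (List A), closure {x | IsConcat C x} = X
/-- The set `I = ⋃_{k ≥ 1} [2^{2k}, 2^{2k+1}] ⊆ ℕ`. -/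
def wordI : Set ℕ := {n | ∃ k : ℕ, 1 ≤ k ∧ 2 ^ (2 * k) ≤ n ∧ n ≤ 2 ^ (2 * k + 1)}

/-- The set `J = {(0,0), (1,1), (1,2), (2,1), (2,2)} ⊆ A × A`, `A = {0,1,2}`. -/
def setJ : Set (Fin 3 × Fin 3) := {(0, 0), (1, 1), (1, 2), (2, 1), (2, 2)}

/-- The word `0^n` over `{0,1,2}`. -/
def zeros (n : ℕ) : List (Fin 3) := List.replicate n 0

/-- A word `w` over `{0,1,2}` is stable if (1) neither `12` nor `21` occurs in `w`, and
(2) whenever `x ∈ A^ℤ` satisfies `x_{[1, 3|w|+2]} = 0^{|w|+1} w 0^{|w|+1}`, and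
`1 ≤ n ≤ |w|`, `a ∈ {1,2}`, `|w|+1 ≤ i < j ≤ 2|w|+2` are such that `x_{[i,j]} = 0 aⁿ 0`,
then `a = 1` iff `(n, (x_{i-n}, x_{j+n})) ∈ (I × J) ∪ (Iᶜ × Jᶜ)`. -/
def Stable (w : List (Fin 3)) : Prop :=
  (¬ [1, 2] <:+: w) ∧ (¬ [2, 1] <:+: w) ∧
    ∀ x : ℤ → Fin 3,
      OccursAt (zeros (w.length + 1) ++ w ++ zeros (w.length + 1)) x 1 →
      ∀ (n : ℕ) (a : Fin 3) (i j : ℤ),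
        1 ≤ n → n ≤ w.length → (a = 1 ∨ a = 2) →
        (w.length : ℤ) + 1 ≤ i → i < j → j ≤ 2 * (w.length : ℤ) + 2 →
        j = i + n + 1 → x i = 0 → x j = 0 → (∀ k : ℤ, i < k → k < j → x k = a) →
        (a = 1 ↔ (n ∈ wordI ∧ (x (i - n), x (j + n)) ∈ setJ) ∨
          (n ∉ wordI ∧ (x (i - n), x (j + n)) ∉ setJ))

/-- The code `C = {0} ∪ {0^{|w|+1} w 0^{|w|+1} : w is stable}`. -/
def codeC : Set (List (Fin 3)) :=
  {[0]} ∪ {u | ∃ w : List (Fin 3), Stable w ∧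
    u = zeros (w.length + 1) ++ w ++ zeros (w.length + 1)}

/-- The coded system `W`: the closure of the set of bi-infinite concatenations of
words from the code `C`. -/
def spaceW : Set (ℤ → Fin 3) := closure {x | IsConcat codeC x}

/-- `W₀ = {x ∈ W : x_i ≠ 0 for only finitely many i}`. -/
def spaceW0 : Set (ℤ → Fin 3) := {x ∈ spaceW | {i : ℤ | x i ≠ 0}.Finite}


lemma word_get (n : ℕ) (a : Fin 3) (k : ℕ)
    (h : k < (zeros (n+1) ++ List.replicate n a ++ zeros (n+1)).length) :
    (zeros (n+1) ++ List.replicate n a ++ zeros (n+1)).get ⟨k, h⟩ =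
      if n + 1 ≤ k ∧ k < 2 * n + 1 then a else 0 := by
  simp only [zeros, List.length_append, List.length_replicate] at h
  rw [List.get_eq_getElem]
  simp only [zeros]
  rcases lt_or_ge k (n+1) with hk | hk
  · rw [List.getElem_append_left (by simp; omega), List.getElem_append_left (by simp; omega),
      List.getElem_replicate, if_neg (by omega)]
  · rcases lt_or_ge k (2*n+1) with hk2 | hk2
    · rw [List.getElem_append_left (by simp; omega), List.getElem_append_right (by simp; omega),
        List.getElem_replicate, if_pos ⟨hk, hk2⟩]
    · rw [List.getElem_append_right (by simp; omega), List.getElem_replicate, if_neg (by omega)]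

lemma word_len (n : ℕ) (a : Fin 3) :
    (zeros (n+1) ++ List.replicate n a ++ zeros (n+1)).length = 3*n+2 := by
  simp [zeros]; omega

lemma occ_val {n : ℕ} {a : Fin 3} {x : ℤ → Fin 3}
    (h : OccursAt (zeros (n+1) ++ List.replicate n a ++ zeros (n+1)) x 1)
    (t : ℤ) (h1 : 1 ≤ t) (h2 : t ≤ 3*n+2) :
    x t = if (n:ℤ)+2 ≤ t ∧ t ≤ 2*n+1 then a else 0 := by
  have hk : (t-1).toNat < (zeros (n+1) ++ List.replicate n a ++ zeros (n+1)).length := by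
    rw [word_len]; omega
  have := h ⟨(t-1).toNat, hk⟩
  simp only [word_get] at this
  have ht : (1 : ℤ) + ((t-1).toNat : ℕ) = t := by omega
  rw [ht] at this
  rw [this]
  have hcast : (((t-1).toNat : ℕ) : ℤ) = t - 1 := by omega
  split_ifs with h3 h4 h4 <;> first | rfl | (exfalso; omega)

lemma occ_of_val {n : ℕ} {a : Fin 3} :
    OccursAt (zeros (n+1) ++ List.replicate n a ++ zeros (n+1))
      (fun t => if (n:ℤ)+2 ≤ t ∧ t ≤ 2*n+1 then a else 0) 1 := by
  intro k
  rw [word_get]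
  have hk : (k:ℕ) < 3*n+2 := by have h2 := k.2; simp [zeros] at h2; omega
  simp only
  split_ifs with h3 h4 h4 <;> first | rfl | (exfalso; omega)

lemma zz_mem_setJ : ((0 : Fin 3), (0 : Fin 3)) ∈ setJ := by simp [setJ]

lemma key_stable (n : ℕ) (hn : 1 ≤ n) (a : Fin 3) (ha : a = 1 ∨ a = 2) :
    Stable (List.replicate n a) ↔ ((a = 1) ↔ n ∈ wordI) := by
  constructor
  · rintro ⟨-, -, h3⟩
    simp only [List.length_replicate] at h3
    set x : ℤ → Fin 3 := fun t => if (n:ℤ)+2 ≤ t ∧ t ≤ 2*(n:ℤ)+1 then a else 0 with hxdef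
    have hocc : OccursAt (zeros (n+1) ++ List.replicate n a ++ zeros (n+1)) x 1 := occ_of_val
    have hxi : x ((n:ℤ)+1) = 0 := if_neg (by omega)
    have hxj : x (2*(n:ℤ)+2) = 0 := if_neg (by omega)
    have hall : ∀ k : ℤ, (n:ℤ)+1 < k → k < 2*(n:ℤ)+2 → x k = a :=
      fun k h1 h2 => if_pos ⟨by omega, by omega⟩
    have hmain := h3 x hocc n a ((n:ℤ)+1) (2*(n:ℤ)+2) hn le_rfl ha le_rfl (by omega)
      le_rfl (by omega) hxi hxj hall
    have e1 : x ((n:ℤ)+1 - (n:ℕ)) = 0 := if_neg (by omega)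
    have e2 : x (2*(n:ℤ)+2 + (n:ℕ)) = 0 := if_neg (by omega)
    rw [e1, e2] at hmain
    constructor
    · intro h1
      rcases hmain.mp h1 with ⟨hI, -⟩ | ⟨-, hc⟩
      · exact hI
      · exact absurd zz_mem_setJ hc
    · intro hI
      exact hmain.mpr (Or.inl ⟨hI, zz_mem_setJ⟩)
  · intro hiff
    refine ⟨?_, ?_, ?_⟩
    · intro hin
      have h1 : (1 : Fin 3) = a := List.eq_of_mem_replicate (hin.subset (by simp))
      have h2 : (2 : Fin 3) = a := List.eq_of_mem_replicate (hin.subset (by simp))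
      exact absurd (h1.trans h2.symm) (by decide)
    · intro hin
      have h1 : (1 : Fin 3) = a := List.eq_of_mem_replicate (hin.subset (by simp))
      have h2 : (2 : Fin 3) = a := List.eq_of_mem_replicate (hin.subset (by simp))
      exact absurd (h1.trans h2.symm) (by decide)
    · intro x hx n' b i j hn'1 hn'2 hb hi hij hj hjeq hxi hxj hall
      simp only [List.length_replicate] at hx hi hj hn'2 ⊢
      have hmid : ∀ t : ℤ, (n:ℤ)+2 ≤ t → t ≤ 2*(n:ℤ)+1 → x t = a := by
        intro t h1 h2
        have := occ_val hx t (by omega) (by omega)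
        rwa [if_pos ⟨h1, by omega⟩] at this
      have hzero : ∀ t : ℤ, 1 ≤ t → t ≤ 3*(n:ℤ)+2 → ¬((n:ℤ)+2 ≤ t ∧ t ≤ 2*(n:ℤ)+1) →
          x t = 0 := by
        intro t h1 h2 h3
        have := occ_val hx t (by omega) (by omega)
        rwa [if_neg (by omega)] at this
      have hane : a ≠ 0 := by rcases ha with rfl | rfl <;> decide
      have hia : i = (n:ℤ)+1 := by
        by_contra hne
        rcases le_or_gt i (2*(n:ℤ)+1) with h2 | h2
        · have := hmid i (by omega) h2
          rw [hxi] at this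
          exact hane this.symm
        · omega
      have hja : j = 2*(n:ℤ)+2 := by
        by_contra hne
        have h2 : j ≤ 2*(n:ℤ)+1 := by omega
        have := hmid j (by omega) h2
        rw [hxj] at this
        exact hane this.symm
      have hn'n : n' = n := by omega
      have hba : b = a := by
        have h1 := hall ((n:ℤ)+2) (by omega) (by omega)
        have h2 := hmid ((n:ℤ)+2) le_rfl (by omega)
        rw [h1] at h2
        exact h2
      have hxin : x (i - (n':ℕ)) = 0 := hzero _ (by omega) (by omega) (by omega)
      have hxjn : x (j + (n':ℕ)) = 0 := hzero _ (by omega) (by omega) (by omega)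
      rw [hxin, hxjn, hba, hn'n]
      constructor
      · intro h1
        exact Or.inl ⟨hiff.mp h1, zz_mem_setJ⟩
      · rintro (⟨hI, -⟩ | ⟨-, hc⟩)
        · exact hiff.mpr hI
        · exact absurd zz_mem_setJ hc

/-- For every `n ≥ 1`: the block `0^n` is stable; `1^n` is stable iff `n ∈ I`;
and `2^n` is stable iff `n ∉ I`. -/
theorem stable_replicate (n : ℕ) (hn : 1 ≤ n) :
    Stable (List.replicate n (0 : Fin 3)) ∧
    (Stable (List.replicate n (1 : Fin 3)) ↔ n ∈ wordI) ∧
    (Stable (List.replicate n (2 : Fin 3)) ↔ n ∉ wordI) := by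
  refine ⟨⟨?_, ?_, ?_⟩, ?_, ?_⟩
  · intro hin
    have h1 : (1 : Fin 3) = 0 := List.eq_of_mem_replicate (hin.subset (by simp))
    exact absurd h1 (by decide)
  · intro hin
    have h1 : (2 : Fin 3) = 0 := List.eq_of_mem_replicate (hin.subset (by simp))
    exact absurd h1 (by decide)
  · intro x hx n' a i j hn'1 hn'2 ha hi hij hj hjeq hxi hxj hall
    exfalso
    simp only [List.length_replicate] at hx hi hj hn'2
    have h1 : x (i+1) = 0 := by
      have := occ_val hx (i+1) (by omega) (by omega)
      rwa [ite_self] at this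
    have h2 := hall (i+1) (by omega) (by omega)
    rcases ha with rfl | rfl <;> exact absurd (h1.symm.trans h2) (by decide)
  · have := key_stable n hn 1 (Or.inl rfl)
    simpa using this
  · have := key_stable n hn 2 (Or.inr rfl)
    rw [this]
    have h21 : ¬((2 : Fin 3) = 1) := by decide
    constructor
    · intro hiff hI
      exact h21 (hiff.mpr hI)
    · intro hnI
      exact ⟨fun h2 => absurd h2 h21, fun hI => absurd hI hnI⟩
end

section
/- If the block w = w_1 w_2 ⋯ w_{|w|} over {0,1,2} is stable, then the reversed block w_{|w|} ⋯ w_2 w_1 is stable. -/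
open Set Function

lemma setJ_symm : ∀ p q : Fin 3, ((p, q) ∈ setJ ↔ (q, p) ∈ setJ) := by
  simp only [setJ, Set.mem_insert_iff, Set.mem_singleton_iff]
  decide

/-- If a block over `{0,1,2}` is stable, then so is its reversal. -/
theorem stable_reverse (w : List (Fin 3)) (hw : Stable w) : Stable w.reverse := by
  obtain ⟨h12, h21, h2⟩ := hw
  refine ⟨fun h => h21 (List.reverse_infix.mp (by simpa using h)),
          fun h => h12 (List.reverse_infix.mp (by simpa using h)), ?_⟩
  intro x hx n a i j hn1 hnL ha hi hij hj hji hxi hxj hmid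
  simp only [List.length_reverse] at hnL hi hj hx
  set L : ℕ := w.length with hL
  set y : ℤ → Fin 3 := fun m => x (3 * (L : ℤ) + 3 - m) with hy
  have hyocc : OccursAt (zeros (L + 1) ++ w ++ zeros (L + 1)) y 1 := by
    intro k
    have hlen : (zeros (L + 1) ++ w ++ zeros (L + 1)).length = 3 * L + 2 := by
      simp [zeros]; omega
    have hk : (k : ℕ) < 3 * L + 2 := by rw [← hlen]; exact k.isLt
    have hrev : zeros (L + 1) ++ w.reverse ++ zeros (L + 1)
        = (zeros (L + 1) ++ w ++ zeros (L + 1)).reverse := by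
      simp [zeros, List.reverse_append, List.reverse_replicate, List.append_assoc]
    rw [hrev] at hx
    have hk' : 3 * L + 1 - (k : ℕ) < (zeros (L + 1) ++ w ++ zeros (L + 1)).reverse.length := by
      simp only [List.length_reverse, hlen]; omega
    have h := hx ⟨3 * L + 1 - (k : ℕ), hk'⟩
    simp only [List.get_eq_getElem, List.getElem_reverse, List.length_reverse, hlen] at h
    have harg : (1 : ℤ) + ((3 * L + 1 - (k : ℕ) : ℕ) : ℤ) = 3 * (L : ℤ) + 3 - (1 + (k : ℕ)) := by
      have : (k : ℕ) ≤ 3 * L + 1 := by omega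
      push_cast [this]; ring
    rw [harg] at h
    have hidx : 3 * L + 2 - 1 - (3 * L + 1 - (k : ℕ)) = (k : ℕ) := by omega
    simp only [hidx] at h
    simpa [List.get_eq_getElem] using h
  have key := h2 y hyocc n a (3 * (L : ℤ) + 3 - j) (3 * (L : ℤ) + 3 - i) hn1 hnL ha
    (by omega) (by omega) (by omega) (by omega)
    (by show x (3 * (L : ℤ) + 3 - (3 * (L : ℤ) + 3 - j)) = 0
        rwa [show 3 * (L : ℤ) + 3 - (3 * (L : ℤ) + 3 - j) = j by ring])
    (by show x (3 * (L : ℤ) + 3 - (3 * (L : ℤ) + 3 - i)) = 0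
        rwa [show 3 * (L : ℤ) + 3 - (3 * (L : ℤ) + 3 - i) = i by ring])
    (by intro k hk1 hk2
        show x (3 * (L : ℤ) + 3 - k) = a
        exact hmid _ (by omega) (by omega))
  have e1 : y (3 * (L : ℤ) + 3 - j - n) = x (j + n) := by
    show x _ = _; congr 1; ring
  have e2 : y ((3 * (L : ℤ) + 3 - i) + n) = x (i - n) := by
    show x _ = _; congr 1; ring
  rw [e1, e2] at key
  rw [key, setJ_symm (x (j + n)) (x (i - n))]
end

section
/- If w and w' are stable blocks over {0,1,2} and n ≥ max{|w|, |w'|}, then the block w 0^{n+1} w' is stable. Consequently, every finite concatenation of blocks from the code C is stable. -/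
open Set Function

section StableAux

/-- `w` extended by zeros on both sides, as a function `ℤ → Fin 3`. -/
def extz (W : List (Fin 3)) (s : ℤ) : Fin 3 :=
  if h : 0 ≤ s ∧ s < W.length then W[s.toNat]'(by omega) else 0

lemma getElem_congr' (l : List (Fin 3)) (m m' : ℕ) (h : m < l.length) (e : m = m') :
    l[m] = l[m']'(e ▸ h) := by subst e; rfl

lemma ext_of_neg {W : List (Fin 3)} {s : ℤ} (h : s < 0) : extz W s = 0 := by
  unfold extz; rw [dif_neg]; omega

lemma ext_of_ge {W : List (Fin 3)} {s : ℤ} (h : (W.length : ℤ) ≤ s) : extz W s = 0 := by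
  unfold extz; rw [dif_neg]; omega

lemma ext_eq_getElem {W : List (Fin 3)} {s : ℤ} (h0 : 0 ≤ s) (h1 : s < (W.length : ℤ)) :
    extz W s = W[s.toNat]'(by omega) := by
  unfold extz; rw [dif_pos ⟨h0, h1⟩]

lemma ext_ne_zero {W : List (Fin 3)} {s : ℤ} (h : extz W s ≠ 0) :
    0 ≤ s ∧ s < (W.length : ℤ) := by
  by_contra hc
  exact h (by unfold extz; rw [dif_neg hc])

lemma length_zeros (m : ℕ) : (zeros m).length = m := List.length_replicate

lemma ext_zeros (m : ℕ) (s : ℤ) : extz (zeros m) s = 0 := by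
  by_contra h
  obtain ⟨h0, h1⟩ := ext_ne_zero h
  rw [ext_eq_getElem h0 h1] at h
  unfold zeros at h
  simp at h

lemma ext_append_lt {u v : List (Fin 3)} {s : ℤ} (h : s < (u.length : ℤ)) :
    extz (u ++ v) s = extz u s := by
  rcases lt_or_ge s 0 with hs | hs
  · rw [ext_of_neg hs, ext_of_neg hs]
  · have h2 : s < ((u ++ v).length : ℤ) := by simp; omega
    rw [ext_eq_getElem hs h2, ext_eq_getElem hs h]
    exact List.getElem_append_left (by omega)

lemma ext_append_ge {u v : List (Fin 3)} {s : ℤ} (h : (u.length : ℤ) ≤ s) :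
    extz (u ++ v) s = extz v (s - u.length) := by
  rcases lt_or_ge s ((u ++ v).length : ℤ) with h2 | h2
  · have hlen : ((u ++ v).length : ℤ) = u.length + v.length := by simp
    have hv : s - u.length < (v.length : ℤ) := by omega
    have hv0 : (0 : ℤ) ≤ s - u.length := by omega
    rw [ext_eq_getElem (by omega) h2, ext_eq_getElem hv0 hv]
    rw [List.getElem_append_right (by omega : u.length ≤ s.toNat)]
    exact getElem_congr' _ _ _ _ (by omega)
  · have hlen : ((u ++ v).length : ℤ) = u.length + v.length := by simp
    rw [ext_of_ge h2, ext_of_ge (by omega)]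

lemma a_ne_zero {a : Fin 3} (ha : a = 1 ∨ a = 2) : a ≠ 0 := by
  rcases ha with h | h <;> subst h <;> decide

/-- The "core" of the stability condition, phrased purely in terms of `extz`. -/
def Core (W : List (Fin 3)) : Prop :=
  ∀ (n : ℕ) (a : Fin 3) (i j : ℤ), 1 ≤ n → (a = 1 ∨ a = 2) →
    j = i + n + 1 → extz W i = 0 → extz W j = 0 →
    (∀ k : ℤ, i < k → k < j → extz W k = a) →
    (a = 1 ↔ (n ∈ wordI ∧ (extz W (i - n), extz W (j + n)) ∈ setJ) ∨
      (n ∉ wordI ∧ (extz W (i - n), extz W (j + n)) ∉ setJ))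

lemma pattern_ext (W : List (Fin 3)) (t : ℤ) :
    extz (zeros (W.length + 1) ++ W ++ zeros (W.length + 1)) t
      = extz W (t - ((W.length : ℤ) + 1)) := by
  have hz : ((zeros (W.length + 1)).length : ℤ) = (W.length : ℤ) + 1 := by
    rw [length_zeros]; push_cast; ring
  have hzw : (((zeros (W.length + 1) ++ W)).length : ℤ) = 2 * (W.length : ℤ) + 1 := by
    simp [length_zeros]; push_cast; ring
  rcases lt_or_ge t (((zeros (W.length + 1) ++ W)).length : ℤ) with h | h
  · rw [ext_append_lt h]
    rcases lt_or_ge t ((zeros (W.length + 1)).length : ℤ) with h1 | h1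
    · rw [ext_append_lt h1, ext_zeros, ext_of_neg (by omega)]
    · rw [ext_append_ge h1]
      congr 1
      omega
  · rw [ext_append_ge h, ext_zeros, ext_of_ge (by omega)]

lemma occursAt_iff (W : List (Fin 3)) (x : ℤ → Fin 3) :
    OccursAt (zeros (W.length + 1) ++ W ++ zeros (W.length + 1)) x 1 ↔
      ∀ t : ℤ, 1 ≤ t → t ≤ 3 * (W.length : ℤ) + 2 →
        x t = extz W (t - ((W.length : ℤ) + 2)) := by
  have hplen : ((zeros (W.length + 1) ++ W ++ zeros (W.length + 1)).length : ℤ)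
      = 3 * (W.length : ℤ) + 2 := by
    simp [length_zeros]; push_cast; ring
  constructor
  · intro h t h1 h2
    have hk : (t - 1).toNat < (zeros (W.length + 1) ++ W ++ zeros (W.length + 1)).length := by
      omega
    have := h ⟨(t - 1).toNat, hk⟩
    simp only [List.get_eq_getElem] at this
    have e1 : (1 : ℤ) + ((t - 1).toNat : ℤ) = t := by omega
    rw [e1] at this
    rw [this]
    have e2 : (zeros (W.length + 1) ++ W ++ zeros (W.length + 1))[(t - 1).toNat]'hk
        = extz (zeros (W.length + 1) ++ W ++ zeros (W.length + 1)) (((t - 1).toNat : ℤ)) := by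
      rw [ext_eq_getElem (by omega) (by omega)]
      exact getElem_congr' _ _ _ _ (by omega)
    rw [e2, pattern_ext]
    congr 1
    omega
  · intro h k
    have hk := k.isLt
    simp only [List.get_eq_getElem]
    have h1 : (1 : ℤ) ≤ 1 + (k : ℤ) := by omega
    have h2 : (1 : ℤ) + (k : ℤ) ≤ 3 * (W.length : ℤ) + 2 := by omega
    rw [h _ h1 h2]
    have e2 : (zeros (W.length + 1) ++ W ++ zeros (W.length + 1))[(k : ℕ)]'hk
        = extz (zeros (W.length + 1) ++ W ++ zeros (W.length + 1)) ((k : ℕ) : ℤ) := by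
      rw [ext_eq_getElem (by omega) (by omega)]
      exact getElem_congr' _ _ _ _ (by omega)
    rw [e2, pattern_ext]
    congr 1
    omega

lemma stable_iff (W : List (Fin 3)) :
    Stable W ↔ (¬ [1, 2] <:+: W) ∧ (¬ [2, 1] <:+: W) ∧ Core W := by
  constructor
  · rintro ⟨h1, h2, h3⟩
    refine ⟨h1, h2, ?_⟩
    intro n a i j hn ha hj hi0 hj0 hint
    have haz : a ≠ 0 := a_ne_zero ha
    have hL1 : 0 ≤ i + 1 ∧ i + 1 < (W.length : ℤ) :=
      ext_ne_zero (by rw [hint (i + 1) (by omega) (by omega)]; exact haz)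
    have hL2 : 0 ≤ j - 1 ∧ j - 1 < (W.length : ℤ) :=
      ext_ne_zero (by rw [hint (j - 1) (by omega) (by omega)]; exact haz)
    have hocc : OccursAt (zeros (W.length + 1) ++ W ++ zeros (W.length + 1))
        (fun t => extz W (t - ((W.length : ℤ) + 2))) 1 := by
      rw [occursAt_iff]
      intro t _ _
      rfl
    have key := h3 _ hocc n a (i + ((W.length : ℤ) + 2)) (j + ((W.length : ℤ) + 2)) hn
      (by omega) ha (by omega) (by omega) (by omega) (by omega)
      (by show extz W (i + ((W.length : ℤ) + 2) - ((W.length : ℤ) + 2)) = 0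
          rw [show i + ((W.length : ℤ) + 2) - ((W.length : ℤ) + 2) = i by ring]; exact hi0)
      (by show extz W (j + ((W.length : ℤ) + 2) - ((W.length : ℤ) + 2)) = 0
          rw [show j + ((W.length : ℤ) + 2) - ((W.length : ℤ) + 2) = j by ring]; exact hj0)
      (by intro k hk1 hk2
          show extz W (k - ((W.length : ℤ) + 2)) = a
          exact hint _ (by omega) (by omega))
    have e1 : extz W (i + ((W.length : ℤ) + 2) - n - ((W.length : ℤ) + 2))
        = extz W (i - n) := by congr 1; ring
    have e2 : extz W (j + ((W.length : ℤ) + 2) + n - ((W.length : ℤ) + 2))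
        = extz W (j + n) := by congr 1; ring
    rw [e1, e2] at key
    exact key
  · rintro ⟨h1, h2, hC⟩
    refine ⟨h1, h2, ?_⟩
    intro x hocc n a i j hn hnL ha hi hij hjb hj hxi hxj hint
    rw [occursAt_iff] at hocc
    have hnL' : (n : ℤ) ≤ (W.length : ℤ) := by exact_mod_cast hnL
    have exi : extz W (i - ((W.length : ℤ) + 2)) = 0 := by
      rw [← hocc i (by omega) (by omega)]; exact hxi
    have exj : extz W (j - ((W.length : ℤ) + 2)) = 0 := by
      rw [← hocc j (by omega) (by omega)]; exact hxj
    have key := hC n a (i - ((W.length : ℤ) + 2)) (j - ((W.length : ℤ) + 2)) hn ha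
      (by omega) exi exj
      (by intro k hk1 hk2
          have hh := hocc (k + ((W.length : ℤ) + 2)) (by omega) (by omega)
          rw [show k + ((W.length : ℤ) + 2) - ((W.length : ℤ) + 2) = k by ring] at hh
          rw [← hh]
          exact hint _ (by omega) (by omega))
    have e1 : x (i - n) = extz W (i - ((W.length : ℤ) + 2) - n) := by
      rw [hocc (i - n) (by omega) (by omega)]; congr 1; ring
    have e2 : x (j + n) = extz W (j - ((W.length : ℤ) + 2) + n) := by
      rw [hocc (j + n) (by omega) (by omega)]; congr 1; ring
    rw [e1, e2]
    exact key

lemma infix_pair {a b : Fin 3} (ha : a ≠ 0) (hb : b ≠ 0) (W : List (Fin 3)) :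
    [a, b] <:+: W ↔ ∃ s : ℤ, extz W s = a ∧ extz W (s + 1) = b := by
  constructor
  · rintro ⟨s, t, rfl⟩
    refine ⟨(s.length : ℤ), ?_, ?_⟩
    · rw [List.append_assoc, ext_append_ge (le_refl ((s.length : ℤ))), sub_self]
      rw [ext_eq_getElem (le_refl (0 : ℤ))
        (by push_cast [List.length_append, List.length_cons, List.length_nil]; omega)]
      rfl
    · rw [List.append_assoc,
        ext_append_ge (by omega : ((s.length : ℤ)) ≤ (s.length : ℤ) + 1)]
      rw [show (s.length : ℤ) + 1 - s.length = 1 by ring]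
      rw [ext_eq_getElem (by norm_num)
        (by push_cast [List.length_append, List.length_cons, List.length_nil]; omega)]
      rfl
  · rintro ⟨s, hs1, hs2⟩
    have h1 := ext_ne_zero (W := W) (s := s) (by rw [hs1]; exact ha)
    have h2 := ext_ne_zero (W := W) (s := s + 1) (by rw [hs2]; exact hb)
    rw [ext_eq_getElem h1.1 h1.2] at hs1
    rw [ext_eq_getElem (by omega) h2.2] at hs2
    have hd : W.drop s.toNat = a :: b :: W.drop (s.toNat + 2) := by
      rw [List.drop_eq_getElem_cons (by omega), hs1]
      congr 1
      rw [List.drop_eq_getElem_cons (h := by omega)]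
      congr 1
      rw [← hs2]
      exact getElem_congr' _ _ _ _ (by omega)
    refine ⟨W.take s.toNat, W.drop (s.toNat + 2), ?_⟩
    calc W.take s.toNat ++ [a, b] ++ W.drop (s.toNat + 2)
        = W.take s.toNat ++ (a :: b :: W.drop (s.toNat + 2)) := by simp
      _ = W.take s.toNat ++ W.drop s.toNat := by rw [hd]
      _ = W := List.take_append_drop _ _

/-- A copy of `w`, together with `|w|+1` zeros on the left and `|w|` "agreement margin"
on the right, embedded in `W` at offset `off`. -/
def EmbedAt (w : List (Fin 3)) (off : ℤ) (W : List (Fin 3)) : Prop :=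
  ∀ s : ℤ, -((w.length : ℤ) + 1) ≤ s → s ≤ 2 * (w.length : ℤ) → extz W (off + s) = extz w s

lemma stable_of_decomp (W : List (Fin 3))
    (h : ∀ p : ℤ, extz W p ≠ 0 → ∃ w off, Stable w ∧ EmbedAt w off W ∧
      off ≤ p ∧ p < off + (w.length : ℤ)) :
    Stable W := by
  have noinf : ∀ a b : Fin 3, a ≠ 0 → b ≠ 0 →
      (∀ w : List (Fin 3), Stable w → ¬ [a, b] <:+: w) → ¬ [a, b] <:+: W := by
    intro a b ha hb hno hin
    obtain ⟨s, hs1, hs2⟩ := (infix_pair ha hb W).1 hin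
    obtain ⟨w, off, hw, hemb, hp1, hp2⟩ := h s (by rw [hs1]; exact ha)
    have e1 : extz w (s - off) = a := by
      have hh := hemb (s - off) (by omega) (by omega)
      rw [show off + (s - off) = s by ring] at hh
      rw [← hh]; exact hs1
    have e2 : extz w (s - off + 1) = b := by
      have hh := hemb (s - off + 1) (by omega) (by omega)
      rw [show off + (s - off + 1) = s + 1 by ring] at hh
      rw [← hh]; exact hs2
    exact hno w hw ((infix_pair ha hb w).2 ⟨s - off, e1, e2⟩)
  rw [stable_iff]
  refine ⟨?_, ?_, ?_⟩
  · exact noinf 1 2 (by decide) (by decide) (fun w hw => hw.1)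
  · exact noinf 2 1 (by decide) (by decide) (fun w hw => hw.2.1)
  · intro n a i j hn ha hj hi0 hj0 hint
    have haz : a ≠ 0 := a_ne_zero ha
    obtain ⟨w, off, hw, hemb, hp1, hp2⟩ :=
      h (i + 1) (by rw [hint (i + 1) (by omega) (by omega)]; exact haz)
    have hCw : Core w := ((stable_iff w).1 hw).2.2
    have hjle : j ≤ off + (w.length : ℤ) := by
      by_contra hcon
      push_neg at hcon
      have h0 : extz W (off + (w.length : ℤ)) = 0 := by
        have hh := hemb (w.length : ℤ) (by omega) (by omega)
        rw [hh]
        exact ext_of_ge (le_refl _)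
      have ha' := hint (off + (w.length : ℤ)) (by omega) (by omega)
      exact haz (by rw [← ha']; exact h0)
    have key := hCw n a (i - off) (j - off) hn ha (by omega)
      (by have hh := hemb (i - off) (by omega) (by omega)
          rw [show off + (i - off) = i by ring] at hh
          rw [← hh]; exact hi0)
      (by have hh := hemb (j - off) (by omega) (by omega)
          rw [show off + (j - off) = j by ring] at hh
          rw [← hh]; exact hj0)
      (by intro k hk1 hk2
          have hh := hemb k (by omega) (by omega)
          rw [← hh]
          exact hint _ (by omega) (by omega))
    have e1 : extz w (i - off - n) = extz W (i - n) := by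
      have hh := hemb (i - off - n) (by omega) (by omega)
      rw [show off + (i - off - n) = i - n by ring] at hh
      exact hh.symm
    have e2 : extz w (j - off + n) = extz W (j + n) := by
      have hh := hemb (j - off + n) (by omega) (by omega)
      rw [show off + (j - off + n) = j + n by ring] at hh
      exact hh.symm
    rw [e1, e2] at key
    exact key

lemma part1 (w w' : List (Fin 3)) (n : ℕ) (hw : Stable w) (hw' : Stable w')
    (hn1 : w.length ≤ n) (hn2 : w'.length ≤ n) :
    Stable (w ++ zeros (n + 1) ++ w') := by
  apply stable_of_decomp
  intro p hp
  have hlen1 : ((w ++ zeros (n + 1)).length : ℤ) = (w.length : ℤ) + (n : ℤ) + 1 := by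
    simp [length_zeros]; push_cast; ring
  have f1 : ∀ s : ℤ, s ≤ (w.length : ℤ) + n → extz (w ++ zeros (n + 1) ++ w') s = extz w s := by
    intro s hs
    rw [ext_append_lt (by omega)]
    rcases lt_or_ge s (w.length : ℤ) with h | h
    · rw [ext_append_lt h]
    · rw [ext_of_ge h, ext_append_ge h, ext_zeros]
  have f2 : ∀ s : ℤ, -((n : ℤ) + 1) ≤ s →
      extz (w ++ zeros (n + 1) ++ w') ((w.length : ℤ) + n + 1 + s) = extz w' s := by
    intro s hs
    rcases lt_or_ge s 0 with h | h
    · rw [ext_of_neg h, ext_append_lt (by omega), ext_append_ge (by omega), ext_zeros]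
    · rw [ext_append_ge (by omega)]
      congr 1
      omega
  rcases le_or_gt p ((w.length : ℤ) + n) with hple | hpgt
  · have hne : extz w p ≠ 0 := by rw [← f1 p hple]; exact hp
    obtain ⟨h0, h1'⟩ := ext_ne_zero hne
    refine ⟨w, 0, hw, ?_, by omega, by omega⟩
    intro s hs1 hs2
    rw [zero_add]
    exact f1 s (by omega)
  · have hne : extz w' (p - ((w.length : ℤ) + n + 1)) ≠ 0 := by
      have hh := f2 (p - ((w.length : ℤ) + n + 1)) (by omega)
      rw [show (w.length : ℤ) + n + 1 + (p - ((w.length : ℤ) + n + 1)) = p by ring] at hh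
      rw [← hh]; exact hp
    obtain ⟨h0, h1'⟩ := ext_ne_zero hne
    refine ⟨w', (w.length : ℤ) + n + 1, hw', ?_, by omega, by omega⟩
    intro s hs1 hs2
    exact f2 s (by omega)

lemma flatten_decomp : ∀ L : List (List (Fin 3)), (∀ u ∈ L, u ∈ codeC) →
    ∀ p : ℤ, extz L.flatten p ≠ 0 →
      ∃ w off, Stable w ∧ EmbedAt w off L.flatten ∧ off ≤ p ∧
        p < off + (w.length : ℤ) ∧ (w.length : ℤ) + 1 ≤ off := by
  intro L
  induction L with
  | nil =>
    intro _ p hp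
    obtain ⟨h0, h1⟩ := ext_ne_zero hp
    simp at h1
    omega
  | cons u L' ih =>
    intro hL p hp
    have hu : u ∈ codeC := hL u (by simp)
    have hL' : ∀ v ∈ L', v ∈ codeC := fun v hv => hL v (by simp [hv])
    simp only [List.flatten_cons] at hp ⊢
    have lift : ∀ w off, EmbedAt w off L'.flatten → (w.length : ℤ) + 1 ≤ off →
        EmbedAt w (off + (u.length : ℤ)) (u ++ L'.flatten) := by
      intro w off he hoff s hs1 hs2
      have hh := he s hs1 hs2
      rw [← hh]
      rw [ext_append_ge (by omega : (u.length : ℤ) ≤ off + (u.length : ℤ) + s)]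
      congr 1
      ring
    simp only [codeC, Set.mem_union, Set.mem_singleton_iff, Set.mem_setOf_eq] at hu
    rcases hu with rfl | ⟨w₀, hw₀, rfl⟩
    · -- u = [0]
      have hp1 : (1 : ℤ) ≤ p := by
        by_contra hc
        push_neg at hc
        rcases lt_or_ge p 0 with h | h
        · exact hp (ext_of_neg h)
        · have hp0 : p = 0 := by omega
          subst hp0
          apply hp
          rw [ext_append_lt (by simp)]
          rw [ext_eq_getElem (le_refl _) (by simp)]
          rfl
      have hlen0 : (([0] : List (Fin 3)).length : ℤ) = 1 := by simp
      have hp' : extz L'.flatten (p - 1) ≠ 0 := by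
        have hh := ext_append_ge (u := ([0] : List (Fin 3))) (v := L'.flatten) (s := p)
          (by omega)
        rw [hlen0] at hh
        rw [← hh]; exact hp
      obtain ⟨w, off, hsw, hemb, ho1, ho2, ho3⟩ := ih hL' (p - 1) hp'
      refine ⟨w, off + 1, hsw, ?_, by omega, by omega, by omega⟩
      have hh := lift w off hemb ho3
      rw [hlen0] at hh
      exact hh
    · -- u = zeros (k+1) ++ w₀ ++ zeros (k+1)
      have hulen : (((zeros (w₀.length + 1) ++ w₀ ++ zeros (w₀.length + 1))).length : ℤ)
          = 3 * (w₀.length : ℤ) + 2 := by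
        simp [length_zeros]; push_cast; ring
      have hzlen : ((zeros (w₀.length + 1)).length : ℤ) = (w₀.length : ℤ) + 1 := by
        rw [length_zeros]; push_cast; ring
      have hzwlen : ((zeros (w₀.length + 1) ++ w₀).length : ℤ) = 2 * (w₀.length : ℤ) + 1 := by
        simp [length_zeros]; push_cast; ring
      have embu : ∀ s : ℤ, -((w₀.length : ℤ) + 1) ≤ s → s ≤ 2 * (w₀.length : ℤ) →
          extz (zeros (w₀.length + 1) ++ w₀ ++ zeros (w₀.length + 1) ++ L'.flatten)
            ((w₀.length : ℤ) + 1 + s) = extz w₀ s := by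
        intro s hs1 hs2
        rw [ext_append_lt (by omega)]
        rcases lt_or_ge s 0 with h | h
        · rw [ext_of_neg h, ext_append_lt (by omega), ext_append_lt (by omega), ext_zeros]
        · rcases lt_or_ge s (w₀.length : ℤ) with h2 | h2
          · rw [ext_append_lt (by omega), ext_append_ge (by omega)]
            congr 1
            omega
          · rw [ext_of_ge h2, ext_append_ge (by omega), ext_zeros]
      rcases lt_or_ge p (((zeros (w₀.length + 1) ++ w₀ ++ zeros (w₀.length + 1))).length : ℤ)
        with hsm | hbig
      · have hpu : extz (zeros (w₀.length + 1) ++ w₀ ++ zeros (w₀.length + 1)) p ≠ 0 := by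
          rw [← ext_append_lt hsm]; exact hp
        obtain ⟨h0, _⟩ := ext_ne_zero hpu
        have hk1 : (w₀.length : ℤ) + 1 ≤ p := by
          by_contra hc
          push_neg at hc
          apply hpu
          rw [ext_append_lt (by omega), ext_append_lt (by omega)]
          exact ext_zeros _ _
        have hk2 : p ≤ 2 * (w₀.length : ℤ) := by
          by_contra hc
          push_neg at hc
          apply hpu
          rw [ext_append_ge (by omega)]
          exact ext_zeros _ _
        exact ⟨w₀, (w₀.length : ℤ) + 1, hw₀, embu, by omega, by omega, by omega⟩
      · have hp' : extz L'.flatten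
            (p - ((zeros (w₀.length + 1) ++ w₀ ++ zeros (w₀.length + 1)).length : ℤ)) ≠ 0 := by
          rw [← ext_append_ge hbig]; exact hp
        obtain ⟨w, off, hsw, hemb, ho1, ho2, ho3⟩ := ih hL' _ hp'
        exact ⟨w, off + ((zeros (w₀.length + 1) ++ w₀ ++ zeros (w₀.length + 1)).length : ℤ),
          hsw, lift w off hemb ho3, by omega, by omega, by omega⟩

end StableAux

/-- If `w` and `w'` are stable and `n ≥ max {|w|, |w'|}`, then `w 0^{n+1} w'` is stable.
Consequently, every finite concatenation of blocks from the code `C` is stable. -/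
theorem stable_append :
    (∀ (w w' : List (Fin 3)) (n : ℕ), Stable w → Stable w' →
      w.length ≤ n → w'.length ≤ n → Stable (w ++ zeros (n + 1) ++ w')) ∧
    (∀ L : List (List (Fin 3)), (∀ u ∈ L, u ∈ codeC) → Stable L.flatten) := by
  constructor
  · exact part1
  · intro L hL
    apply stable_of_decomp
    intro p hp
    obtain ⟨w, off, h1, h2, h3, h4, _⟩ := flatten_decomp L hL p hp
    exact ⟨w, off, h1, h2, h3, h4⟩
end

section
/- A point x ∈ {0,1,2}^ℤ belongs to W if and only if for every n ≥ 0 there is a stable block w such that x_{[−n, n]} is a subblock of w. -/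
open Set Function

private def seg (y : ℤ → Fin 3) (L : ℤ) (len : ℕ) : List (Fin 3) :=
  List.ofFn fun r : Fin len => y (L + r)

private lemma seg_length (y : ℤ → Fin 3) (L : ℤ) (len : ℕ) : (seg y L len).length = len := by
  simp [seg]

private lemma seg_getElem (y : ℤ → Fin 3) (L : ℤ) (len : ℕ) (r : ℕ) (h : r < (seg y L len).length) :
    (seg y L len)[r] = y (L + r) := by
  simp [seg] at h ⊢

private lemma seg_append (y : ℤ → Fin 3) (L : ℤ) (m k : ℕ) :
    seg y L (m + k) = seg y L m ++ seg y (L + m) k := by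
  apply List.ext_getElem (by simp [seg])
  intro i h1 h2
  rcases lt_or_ge i m with h | h
  · rw [seg_getElem, List.getElem_append_left (by simpa [seg_length])]
    rw [seg_getElem]
  · rw [seg_getElem, List.getElem_append_right (by simpa [seg_length])]
    rw [seg_getElem]
    congr 1
    simp only [seg_length]
    omega

private lemma mem_closure_cyl (S : Set (ℤ → Fin 3)) (x : ℤ → Fin 3) :
    x ∈ closure S ↔ ∀ n : ℕ, ∃ y ∈ S, ∀ i : ℤ, -(n:ℤ) ≤ i → i ≤ n → y i = x i := by
  constructor
  · intro hx n
    set V : Set (ℤ → Fin 3) := ⋂ i ∈ Finset.Icc (-(n:ℤ)) n, {y : ℤ → Fin 3 | y i = x i} with hVdef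
    have hU : ∀ i : ℤ, IsOpen {y : ℤ → Fin 3 | y i = x i} := by
      intro i
      have : {y : ℤ → Fin 3 | y i = x i} = (fun y : ℤ → Fin 3 => y i) ⁻¹' {x i} := rfl
      rw [this]
      exact (isOpen_discrete ({x i} : Set (Fin 3))).preimage (continuous_apply i)
    have hV : IsOpen V :=
      isOpen_biInter_finset (f := fun i => {y : ℤ → Fin 3 | y i = x i}) fun i _ => hU i
    have hxV : x ∈ V :=
      Set.mem_iInter₂.mpr fun i _ => rfl
    obtain ⟨y, hy1, hy2⟩ := _root_.mem_closure_iff.mp hx _ hV hxV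
    refine ⟨y, hy2, fun i h1 h2 => ?_⟩
    have := Set.mem_iInter₂.mp hy1 i (by simp [Finset.mem_Icc]; omega)
    exact this
  · intro h
    choose y hyS hyA using h
    apply mem_closure_of_tendsto (f := y) (b := Filter.atTop)
    · rw [tendsto_pi_nhds]
      intro i
      apply Filter.Tendsto.congr' _ tendsto_const_nhds
      filter_upwards [Filter.eventually_ge_atTop i.natAbs] with n hn
      exact (hyA n i (by omega) (by omega)).symm
    · exact Filter.Eventually.of_forall hyS

-- ===== helper lemmas about code words =====

private lemma zeros_getD (n r : ℕ) : (zeros n).getD r 0 = 0 := by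
  rcases lt_or_ge r n with h | h
  · rw [zeros, List.getD_eq_getElem _ _ (by simpa using h)]
    exact List.getElem_replicate ..
  · exact List.getD_eq_default _ _ (by simpa [zeros] using h)

private lemma code_len (w : List (Fin 3)) :
    (zeros (w.length+1) ++ w ++ zeros (w.length+1)).length = 3*w.length+2 := by
  simp [zeros]; omega

private lemma code_getD_left (w : List (Fin 3)) (r : ℕ) (h : r < w.length+1) :
    (zeros (w.length+1) ++ w ++ zeros (w.length+1)).getD r 0 = 0 := by
  rw [List.getD_append _ _ _ _ (by simp [zeros]; omega)]
  rw [List.getD_append _ _ _ _ (by simpa [zeros] using h)]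
  exact zeros_getD _ _

private lemma code_getD_mid (w : List (Fin 3)) (r : ℕ) (h1 : w.length+1 ≤ r)
    (h2 : r < 2*w.length+1) :
    (zeros (w.length+1) ++ w ++ zeros (w.length+1)).getD r 0
      = w.getD (r - (w.length+1)) 0 := by
  rw [List.getD_append _ _ _ _ (by simp [zeros]; omega)]
  rw [List.getD_append_right _ _ _ _ (by simp [zeros]; omega)]
  simp [zeros]

private lemma code_getD_right (w : List (Fin 3)) (r : ℕ) (h1 : 2*w.length+1 ≤ r) :
    (zeros (w.length+1) ++ w ++ zeros (w.length+1)).getD r 0 = 0 := by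
  rcases lt_or_ge r (3*w.length+2) with h2 | h2
  · rw [List.getD_append_right _ _ _ _ (by simp [zeros]; omega)]
    exact zeros_getD _ _
  · exact List.getD_eq_default _ _ (by rw [code_len]; omega)

private lemma occ_getD {u : List (Fin 3)} {y : ℤ → Fin 3} {s : ℤ}
    (h : OccursAt u y s) (r : ℕ) (hr : r < u.length) : y (s + r) = u.getD r 0 := by
  rw [List.getD_eq_getElem _ _ hr]
  exact h ⟨r, hr⟩

private lemma mk_occ {u : List (Fin 3)} {y : ℤ → Fin 3} {s : ℤ}
    (h : ∀ r : ℕ, r < u.length → y (s + r) = u.getD r 0) : OccursAt u y s := by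
  intro k
  rw [h k k.isLt, List.getD_eq_getElem _ _ k.isLt]
  rfl

private lemma two_consec_infix (w : List (Fin 3)) (q : ℕ) (h : q + 1 < w.length) :
    [w[q]'(by omega), w[q+1]'h] <:+: w := by
  have h2 : [w[q]'(by omega), w[q+1]'h] = (w.drop q).take 2 := by
    apply List.ext_getElem (by simp; omega)
    intro i h1 h2
    simp only [List.getElem_take, List.getElem_drop]
    simp at h1
    interval_cases i
    · simp
    · simp
  rw [h2]
  exact (List.take_prefix 2 _).isInfix.trans (List.drop_suffix q w).isInfix

private lemma stable_no_flip {w : List (Fin 3)} (hw : Stable w) (q : ℕ)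
    (h : q + 1 < w.length) (b c : Fin 3)
    (hbc : (b = 1 ∧ c = 2) ∨ (b = 2 ∧ c = 1))
    (hb : w[q]'(by omega) = b) (hc : w[q+1]'h = c) : False := by
  have := two_consec_infix w q h
  rw [hb, hc] at this
  rcases hbc with ⟨h1, h2⟩ | ⟨h1, h2⟩
  · subst h1; subst h2; exact hw.1 this
  · subst h1; subst h2; exact hw.2.1 this

private lemma occ_val_s16 {u : List (Fin 3)} {y : ℤ → Fin 3} {s : ℤ}
    (h : OccursAt u y s) (q : ℤ) (h1 : s ≤ q) (h2 : q < s + u.length) :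
    y q = u.getD (q - s).toNat 0 := by
  have := occ_getD h (q - s).toNat (by omega)
  rwa [show s + (((q - s).toNat : ℕ) : ℤ) = q by omega] at this

private lemma run_lemma (y : ℤ → Fin 3) (t : ℤ → ℤ) (ht : StrictMono t)
    (hwd : ∀ j : ℤ, ∃ u ∈ codeC, t (j+1) = t j + u.length ∧ OccursAt u y (t j))
    (hcov : ∀ n : ℤ, ∃ j : ℤ, t j ≤ n ∧ n < t (j+1))
    (i j : ℤ) (n : ℕ) (a : Fin 3) (hn : 1 ≤ n) (ha : a = 1 ∨ a = 2)
    (hij : j = i + n + 1) (hyi : y i = 0) (hyj : y j = 0)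
    (hmid : ∀ k : ℤ, i < k → k < j → y k = a) :
    ∃ m : ℤ, t m ≤ i - n ∧ j + n < t (m+1) ∧
      (a = 1 ↔ (n ∈ wordI ∧ (y (i - n), y (j + n)) ∈ setJ) ∨
        (n ∉ wordI ∧ (y (i - n), y (j + n)) ∉ setJ)) := by
  have ha0 : a ≠ 0 := by rcases ha with h | h <;> subst h <;> decide
  obtain ⟨m, hm1, hm2⟩ := hcov (i + 1)
  obtain ⟨u, hu, hul, huo⟩ := hwd m
  have hy1 : y (i + 1) = a := hmid (i+1) (by omega) (by omega)
  rcases hu with hu | ⟨w, hw, hu⟩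
  · -- u = [0] : contradiction
    exfalso
    simp only [Set.mem_singleton_iff] at hu
    subst hu
    have := occ_val_s16 huo (i+1) hm1 (by simp at hul ⊢; omega)
    simp at this
    rw [hy1] at this
    exact ha0 this
  · set P := w.length with hP
    have hulen : u.length = 3*P+2 := by rw [hu]; exact code_len w
    rw [hulen] at hul
    -- position of i+1 inside the w-portion
    have hval1 : y (i+1) = u.getD ((i+1) - t m).toNat 0 :=
      occ_val_s16 huo (i+1) hm1 (by omega)
    have hil : t m + (P+1) ≤ i + 1 := by
      by_contra hcon
      push_neg at hcon
      rw [hu, code_getD_left w _ (by omega)] at hval1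
      rw [hy1] at hval1; exact ha0 hval1
    have hir : i + 1 < t m + (2*P+1) := by
      by_contra hcon
      push_neg at hcon
      rw [hu, code_getD_right w _ (by omega)] at hval1
      rw [hy1] at hval1; exact ha0 hval1
    -- the whole run stays in the w-portion
    have hclaim : ∀ d : ℕ, i + 1 + d < j → i + 1 + d < t m + (2*P+1) := by
      intro d
      induction d with
      | zero => intro _; simpa using hir
      | succ d ih =>
        intro hd
        have hd' : i + 1 + d < j := by omega
        have h1 := ih hd'
        by_contra hcon
        push_neg at hcon
        have he : i + 1 + (d+1 : ℕ) = t m + (2*P+1) := by push_cast; push_cast at hcon h1; omega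
        have hv : y (i + 1 + (d+1:ℕ)) = a := hmid _ (by push_cast; omega) hd
        rw [he] at hv
        have := occ_val_s16 huo (t m + (2*P+1)) (by omega) (by omega)
        rw [hu, code_getD_right w _ (by simp; omega)] at this
        rw [hv] at this
        exact ha0 this
    have hjr : j ≤ t m + (2*P+1) := by
      have := hclaim (n-1) (by push_cast; omega)
      push_cast at this
      omega
    have hnP : n ≤ P := by omega
    have hbound1 : t m ≤ i - n := by omega
    have hbound2 : j + n < t (m+1) := by rw [hul]; push_cast; omega
    refine ⟨m, hbound1, hbound2, ?_⟩
    -- transfer to the canonical window via translation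
    set x : ℤ → Fin 3 := fun q => y (q + (t m - 1)) with hx
    have hocc : OccursAt (zeros (w.length+1) ++ w ++ zeros (w.length+1)) x 1 := by
      apply mk_occ
      intro r hr
      show y ((1 + (r:ℤ)) + (t m - 1)) = _
      rw [show (1 + (r:ℤ)) + (t m - 1) = t m + r by ring, ← hu]
      exact occ_getD huo r (by rwa [← hu] at hr)
    have key := hw.2.2 x hocc n a (i - t m + 1) (j - t m + 1) hn hnP ha
      (by omega) (by omega) (by omega) (by omega)
      (by show y ((i - t m + 1) + (t m - 1)) = 0
          rw [show (i - t m + 1) + (t m - 1) = i by ring]; exact hyi)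
      (by show y ((j - t m + 1) + (t m - 1)) = 0
          rw [show (j - t m + 1) + (t m - 1) = j by ring]; exact hyj)
      (by intro k hk1 hk2
          show y (k + (t m - 1)) = a
          exact hmid _ (by omega) (by omega))
    have e1 : x (i - t m + 1 - n) = y (i - n) := by
      show y ((i - t m + 1 - n) + (t m - 1)) = _
      rw [show (i - t m + 1 - (n:ℤ)) + (t m - 1) = i - n by ring]
    have e2 : x (j - t m + 1 + n) = y (j + n) := by
      show y ((j - t m + 1 + n) + (t m - 1)) = _
      rw [show (j - t m + 1 + (n:ℤ)) + (t m - 1) = j + n by ring]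
    rwa [e1, e2] at key

private lemma no_flip_adj (y : ℤ → Fin 3) (t : ℤ → ℤ)
    (hwd : ∀ j : ℤ, ∃ u ∈ codeC, t (j+1) = t j + u.length ∧ OccursAt u y (t j))
    (hcov : ∀ n : ℤ, ∃ j : ℤ, t j ≤ n ∧ n < t (j+1))
    (k : ℤ) (b c : Fin 3) (hbc : (b = 1 ∧ c = 2) ∨ (b = 2 ∧ c = 1))
    (hb : y k = b) (hc : y (k+1) = c) : False := by
  have hb0 : b ≠ 0 := by rcases hbc with ⟨h, _⟩ | ⟨h, _⟩ <;> subst h <;> decide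
  have hc0 : c ≠ 0 := by rcases hbc with ⟨_, h⟩ | ⟨_, h⟩ <;> subst h <;> decide
  obtain ⟨m, hm1, hm2⟩ := hcov k
  obtain ⟨u, hu, hul, huo⟩ := hwd m
  rcases hu with hu | ⟨w, hw, hu⟩
  · simp only [Set.mem_singleton_iff] at hu
    subst hu
    have := occ_val_s16 huo k hm1 (by simp at hul ⊢; omega)
    simp at this
    rw [hb] at this
    exact hb0 this
  · set P := w.length with hP
    have hulen : u.length = 3*P+2 := by rw [hu]; exact code_len w
    rw [hulen] at hul
    have hvb : y k = u.getD (k - t m).toNat 0 := occ_val_s16 huo k hm1 (by omega)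
    have hkl : t m + (P+1) ≤ k := by
      by_contra hcon; push_neg at hcon
      rw [hu, code_getD_left w _ (by omega)] at hvb
      rw [hb] at hvb; exact hb0 hvb
    have hkr : k < t m + (2*P+1) := by
      by_contra hcon; push_neg at hcon
      rw [hu, code_getD_right w _ (by omega)] at hvb
      rw [hb] at hvb; exact hb0 hvb
    have hvc : y (k+1) = u.getD (k + 1 - t m).toNat 0 := occ_val_s16 huo (k+1) (by omega) (by omega)
    have hk1r : k + 1 < t m + (2*P+1) := by
      by_contra hcon; push_neg at hcon
      rw [hu, code_getD_right w _ (by omega)] at hvc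
      rw [hc] at hvc; exact hc0 hvc
    rw [hu, code_getD_mid w _ (by omega) (by omega)] at hvb
    rw [hu, code_getD_mid w _ (by omega) (by omega)] at hvc
    set q : ℕ := (k - t m).toNat - (P+1) with hq
    have hq1 : ((k+1) - t m).toNat - (P+1) = q + 1 := by omega
    have hqlt : q + 1 < w.length := by omega
    rw [hq1] at hvc
    rw [List.getD_eq_getElem _ _ (by omega : q < w.length)] at hvb
    rw [List.getD_eq_getElem _ _ hqlt] at hvc
    exact stable_no_flip hw q hqlt b c hbc (by rw [← hvb, hb]) (by rw [← hvc, hc])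

private lemma word_val_zero {u : List (Fin 3)} (hu : u ∈ codeC) :
    1 ≤ u.length ∧ u.getD 0 0 = 0 ∧ u.getD (u.length - 1) 0 = 0 := by
  rcases hu with hu | ⟨w, _, hu⟩
  · simp only [Set.mem_singleton_iff] at hu
    subst hu
    refine ⟨by simp, by simp, by simp⟩
  · have hl := code_len w
    rw [hu]
    refine ⟨by rw [hl]; omega, code_getD_left w 0 (by omega), ?_⟩
    rw [hl]
    exact code_getD_right w _ (by omega)

private lemma infix_two {b c : Fin 3} {W : List (Fin 3)} (h : [b, c] <:+: W) :
    ∃ q : ℕ, q + 1 < W.length ∧ W.getD q 0 = b ∧ W.getD (q+1) 0 = c := by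
  obtain ⟨sl, tl, hst⟩ := h
  refine ⟨sl.length, by rw [← hst]; simp, ?_, ?_⟩
  · rw [← hst, List.getD_append _ _ _ _ (by simp),
      List.getD_append_right _ _ _ _ (by omega)]
    simp
  · rw [← hst, List.getD_append _ _ _ _ (by simp),
      List.getD_append_right _ _ _ _ (by omega)]
    simp

private lemma point_isConcat (w : List (Fin 3)) (hw : Stable w) (s : ℤ) :
    IsConcat codeC (fun i => if i < s then (0:Fin 3)
      else (zeros (w.length+1) ++ w ++ zeros (w.length+1)).getD (i - s).toNat 0) := by
  set u := zeros (w.length+1) ++ w ++ zeros (w.length+1) with hu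
  have hL : u.length = 3*w.length+2 := code_len w
  set y : ℤ → Fin 3 := fun i => if i < s then (0:Fin 3) else u.getD (i - s).toNat 0 with hy
  refine ⟨fun j => if j ≤ 0 then s + j else s + ((u.length:ℤ) - 1) + j, ?_, ?_, ?_⟩
  · apply strictMono_int_of_lt_succ
    intro m
    split_ifs <;> omega
  · intro nn
    rcases lt_or_ge nn s with h | h
    · exact ⟨nn - s, by simp only; split_ifs <;> omega⟩
    · rcases lt_or_ge nn (s + u.length) with h2 | h2
      · exact ⟨0, by simp only; split_ifs <;> omega⟩
      · exact ⟨nn - s - u.length + 1, by simp only; split_ifs <;> omega⟩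
  · intro m
    rcases eq_or_ne m 0 with hm | hm
    · subst hm
      refine ⟨u, Or.inr ⟨w, hw, hu⟩, by simp only; split_ifs <;> omega, ?_⟩
      apply mk_occ
      intro r hr
      show (if (s + (0:ℤ) + r : ℤ) < s then (0:Fin 3) else u.getD ((s + 0 + r) - s).toNat 0) = _
      rw [if_neg (by omega)]
      congr 1
      omega
    · refine ⟨[0], Or.inl rfl, by simp only; split_ifs <;> simp <;> omega, ?_⟩
      apply mk_occ
      intro r hr
      have hr0 : r = 0 := by simp at hr; omega
      subst hr0
      show (if _ < s then (0:Fin 3) else u.getD _ 0) = _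
      rcases lt_or_ge m 0 with h | h
      · rw [if_pos (by dsimp only; split_ifs <;> omega)]
        simp
      · rw [if_neg (by dsimp only; split_ifs <;> omega)]
        rw [List.getD_eq_default _ _ (by dsimp only; split_ifs <;> omega)]
        simp
/-- A point `x ∈ {0,1,2}^ℤ` belongs to `W` if and only if for every `n ≥ 0` there is a
stable block `w` such that `x_{[-n, n]}` is a subblock of `w`. -/
theorem mem_W_iff_subblocks_stable (x : ℤ → Fin 3) :
    x ∈ spaceW ↔ ∀ n : ℕ, ∃ w : List (Fin 3), Stable w ∧
      (List.ofFn fun k : Fin (2 * n + 1) => x (-(n : ℤ) + (k : ℕ))) <:+: w := by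
  rw [spaceW, mem_closure_cyl]
  constructor
  · -- forward direction
    intro hx n
    obtain ⟨y, hy, hagree⟩ := hx n
    obtain ⟨t, ht, hcov, hwd⟩ := hy
    obtain ⟨ia, hia1, hia2⟩ := hcov (-(n:ℤ))
    obtain ⟨ib0, hib1, hib2⟩ := hcov (n:ℤ)
    set ib := ib0 + 1 with hibdef
    have hR : (n:ℤ) < t ib := hib2
    set L := t ia with hLdef
    set R := t ib with hRdef
    have hLn : L ≤ -(n:ℤ) := hia1
    have hlen : ((R - L).toNat : ℤ) = R - L := by omega
    set len := (R - L).toNat with hlendef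
    set W := seg y L len with hWdef
    have hWlen : W.length = len := seg_length ..
    have hWval : ∀ r : ℕ, r < len → W.getD r 0 = y (L + r) := by
      intro r hr
      rw [List.getD_eq_getElem _ _ (by omega : r < W.length)]
      exact seg_getElem y L len r (by rwa [seg_length])
    -- the central block is an infix of W
    set blk := (List.ofFn fun k : Fin (2 * n + 1) => x (-(n : ℤ) + (k : ℕ))) with hblkdef
    have hblkseg : blk = seg y (-(n:ℤ)) (2*n+1) := by
      apply List.ext_getElem (by simp [seg_length, hblkdef, seg])
      intro q h1 h2
      have e1 : blk[q]'h1 = x (-(n:ℤ) + q) :=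
        List.getElem_ofFn (f := fun k : Fin (2*n+1) => x (-(n:ℤ) + (k:ℕ))) h1
      have e2 : (seg y (-(n:ℤ)) (2*n+1))[q]'h2 = y (-(n:ℤ) + q) := seg_getElem ..
      rw [e1, e2]
      exact (hagree _ (by simp [hblkdef] at h1; omega) (by simp [hblkdef] at h1; omega)).symm
    set m1 := (-(n:ℤ) - L).toNat with hm1def
    set m2 := (R - ((n:ℤ)+1)).toNat with hm2def
    have hsum : len = m1 + ((2*n+1) + m2) := by omega
    have hsplit : W = seg y L m1 ++ (seg y (-(n:ℤ)) (2*n+1) ++ seg y ((n:ℤ)+1) m2) := by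
      rw [hWdef, hsum, seg_append, seg_append,
        show L + (m1:ℤ) = -(n:ℤ) by omega,
        show -(n:ℤ) + ((2*n+1 : ℕ) : ℤ) = (n:ℤ)+1 by push_cast; omega]
    have hinfix : blk <:+: W := by
      refine ⟨seg y L m1, seg y ((n:ℤ)+1) m2, ?_⟩
      rw [hblkseg, List.append_assoc, ← hsplit]
    refine ⟨W, ?_, hinfix⟩
    -- W is stable
    have hP1 : W.length = len := hWlen
    refine ⟨?_, ?_, ?_⟩
    · -- no [1,2]
      intro hinf
      obtain ⟨q, hq, h1, h2⟩ := infix_two hinf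
      rw [hWlen] at hq
      rw [hWval q (by omega)] at h1
      rw [hWval (q+1) (by omega)] at h2
      exact no_flip_adj y t hwd hcov (L + q) 1 2 (Or.inl ⟨rfl, rfl⟩) h1
        (by rw [show L + (q:ℤ) + 1 = L + ((q+1 : ℕ) : ℤ) by push_cast; ring]; exact h2)
    · intro hinf
      obtain ⟨q, hq, h1, h2⟩ := infix_two hinf
      rw [hWlen] at hq
      rw [hWval q (by omega)] at h1
      rw [hWval (q+1) (by omega)] at h2
      exact no_flip_adj y t hwd hcov (L + q) 2 1 (Or.inr ⟨rfl, rfl⟩) h1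
        (by rw [show L + (q:ℤ) + 1 = L + ((q+1 : ℕ) : ℤ) by push_cast; ring]; exact h2)
    · -- the run condition
      intro x' hocc' n' a i j hn1 hn2 ha hi hij hj hjeq hxi hxj hmid
      rw [hWlen] at hn2 hi hj
      set P := len with hPdef
      have hPpos : 1 ≤ P := by omega
      set δ := L - ((P:ℤ)+2) with hδdef
      have hRL : R = L + P := by omega
      have hwin : ∀ q : ℤ, (P:ℤ)+2 ≤ q → q ≤ 2*(P:ℤ)+1 → x' q = y (q + δ) := by
        intro q hq1 hq2
        have hv := occ_val_s16 hocc' q (by omega)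
          (by rw [code_len W, hWlen]; push_cast; omega)
        rw [code_getD_mid W _ (by rw [hWlen]; omega) (by rw [hWlen]; omega)] at hv
        rw [hWlen] at hv
        rw [hWval _ (by omega)] at hv
        rw [hv]
        congr 1
        omega
      have hyL0 : y L = 0 := by
        obtain ⟨u, hu, hul, huo⟩ := hwd ia
        obtain ⟨hu1, hu2, _⟩ := word_val_zero hu
        have := occ_val_s16 huo L (le_refl _) (by omega)
        rw [show (L - L).toNat = 0 by omega, hu2] at this
        exact this
      have hyR0 : y (R - 1) = 0 := by
        obtain ⟨u, hu, hul, huo⟩ := hwd ib0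
        obtain ⟨hu1, hu2, hu3⟩ := word_val_zero hu
        rw [show ib0 + 1 = ib from rfl] at hul
        have := occ_val_s16 huo (R - 1) (by omega) (by omega)
        rw [show (R - 1 - t ib0).toNat = u.length - 1 by omega, hu3] at this
        exact this
      have hi2 : (P:ℤ)+2 ≤ i := by
        by_contra hcon
        push_neg at hcon
        have hie : i = (P:ℤ)+1 := by omega
        have hv : x' (i+1) = a := hmid (i+1) (by omega) (by omega)
        rw [hie] at hv
        rw [show (P:ℤ)+1+1 = (P:ℤ)+2 by ring] at hv
        rw [hwin ((P:ℤ)+2) (by omega) (by omega)] at hv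
        rw [show (P:ℤ)+2+δ = L by omega, hyL0] at hv
        rcases ha with h | h <;> subst h <;> exact absurd hv (by decide)
      have hj2 : j ≤ 2*(P:ℤ)+1 := by
        by_contra hcon
        push_neg at hcon
        have hje : j = 2*(P:ℤ)+2 := by omega
        have hv : x' (j-1) = a := hmid (j-1) (by omega) (by omega)
        rw [hje] at hv
        rw [show 2*(P:ℤ)+2-1 = 2*(P:ℤ)+1 by ring] at hv
        rw [hwin (2*(P:ℤ)+1) (by omega) (by omega)] at hv
        rw [show 2*(P:ℤ)+1+δ = R - 1 by omega, hyR0] at hv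
        rcases ha with h | h <;> subst h <;> exact absurd hv (by decide)
      -- transfer the run to y
      have hyi : y (i + δ) = 0 := by rw [← hwin i hi2 (by omega)]; exact hxi
      have hyj : y (j + δ) = 0 := by rw [← hwin j (by omega) hj2]; exact hxj
      have hymid : ∀ k : ℤ, i + δ < k → k < j + δ → y k = a := by
        intro k hk1 hk2
        have := hmid (k - δ) (by omega) (by omega)
        rw [hwin (k - δ) (by omega) (by omega)] at this
        rw [show k - δ + δ = k by ring] at this
        exact this
      obtain ⟨m, hb1, hb2, hbic⟩ := run_lemma y t ht hwd hcov (i + δ) (j + δ) n' a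
        hn1 ha (by omega) hyi hyj hymid
      -- position bounds
      have htm : t ia ≤ t m := by
        have : t ia < t (m+1) := by
          have : L ≤ i + δ := by omega
          omega
        have : ia ≤ m := by
          by_contra hcon
          push_neg at hcon
          have := ht.le_iff_le.mpr (show m + 1 ≤ ia by omega)
          omega
        exact ht.le_iff_le.mpr this
      have hleft : (P:ℤ)+2 ≤ i - n' := by
        have : L ≤ t m := htm
        omega
      have hright : j + n' ≤ 2*(P:ℤ)+1 := by
        have hmb : t (m+1) ≤ t ib := by
          have h1 : t m ≤ j + δ := by omega
          have h2 : j + δ < t ib := by omega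
          have : m < ib := by
            by_contra hcon
            push_neg at hcon
            have := ht.le_iff_le.mpr hcon
            omega
          exact ht.le_iff_le.mpr (by omega)
        omega
      -- conclude
      have e1 : x' (i - n') = y (i + δ - n') := by
        rw [hwin (i - n') hleft (by omega)]
        congr 1
        ring
      have e2 : x' (j + n') = y (j + δ + n') := by
        rw [hwin (j + n') (by omega) hright]
        congr 1
        ring
      rw [e1, e2]
      exact hbic
  · intro H n
    obtain ⟨w, hw, hinf⟩ := H n
    obtain ⟨lft, rgt, hlr⟩ := hinf
    have hwlen : w.length = lft.length + (2*n+1) + rgt.length := by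
      rw [← hlr]; simp; omega
    set s : ℤ := -(n:ℤ) - lft.length - (w.length + 1) with hsdef
    refine ⟨_, point_isConcat w hw s, ?_⟩
    intro i h1 h2
    show (if i < s then (0:Fin 3)
      else (zeros (w.length+1) ++ w ++ zeros (w.length+1)).getD (i - s).toNat 0) = x i
    rw [if_neg (by omega)]
    rw [code_getD_mid w _ (by omega) (by omega)]
    have hidx : (i - s).toNat - (w.length + 1) = lft.length + (i + n).toNat := by omega
    rw [hidx, ← hlr]
    rw [List.getD_append _ _ _ _ (by simp; omega)]
    rw [List.getD_append_right _ _ _ _ (by omega)]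
    rw [show lft.length + (i+n).toNat - lft.length = (i+n).toNat by omega]
    rw [List.getD_eq_getElem _ _ (by simp; omega)]
    rw [List.getElem_ofFn]
    congr 1
    simp
    omega
end

section
/- Let W_0 = {x ∈ W : |{i ∈ ℤ : x_i ≠ 0}| < ∞} and for x ∈ W let Z(x) = {i ∈ ℤ : x_i = 0}. Then W_0 is dense in W, and if x, x' ∈ W_0 satisfy Z(x) = Z(x'), then x = x'. -/
open Set Function

lemma finThree (a : Fin 3) (h0 : a ≠ 0) : a = 1 ∨ a = 2 := by revert h0; revert a; decide

lemma J_iff (b c : Fin 3) : ((b,c) ∈ setJ) ↔ (b = 0 ↔ c = 0) := by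
  have h : ((b,c) ∈ setJ) ↔ ((b,c) = (0,0) ∨ (b,c) = (1,1) ∨ (b,c) = (1,2) ∨ (b,c) = (2,1) ∨ (b,c) = (2,2)) := by
    simp [setJ]
  rw [h]; clear h; revert b c; decide

lemma sm_le {f : ℤ → ℤ} (hf : StrictMono f) {a b : ℤ} (h : a ≤ b) : f a + (b - a) ≤ f b := by
  have key : ∀ d : ℕ, f a + d ≤ f (a + d) := by
    intro d
    induction d with
    | zero => simp
    | succ d ih =>
      have := hf (show a + d < a + (d+1 : ℕ) by push_cast; omega)
      push_cast
      push_cast at ih this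
      omega
  have hd := key (b - a).toNat
  have : ((b-a).toNat : ℤ) = b - a := Int.toNat_of_nonneg (by omega)
  rw [this] at hd
  have : a + (b - a) = b := by ring
  rw [this] at hd
  omega

lemma sm_cover {f : ℤ → ℤ} (hf : StrictMono f) (n : ℤ) : ∃ j, f j ≤ n ∧ n < f (j+1) := by
  obtain ⟨j, hj, hmax⟩ := Int.exists_greatest_of_bdd (P := fun z => f z ≤ n)
    ⟨max 0 (n - f 0), by
      intro z hz
      by_contra hc
      push_neg at hc
      have h0z : (0:ℤ) ≤ z := le_trans (le_max_left _ _) (le_of_lt hc)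
      have := sm_le hf h0z
      have : f 0 + z ≤ f z := by omega
      omega⟩
    ⟨min 0 (n - f 0), by
      have hz : min 0 (n - f 0) ≤ 0 := min_le_left _ _
      have := sm_le hf hz
      omega⟩
  exact ⟨j, hj, by by_contra hc; push_neg at hc; have := hmax (j+1) hc; omega⟩

-- pattern lemmas
lemma pat_len (w : List (Fin 3)) : (zeros (w.length+1) ++ w ++ zeros (w.length+1)).length = 3*w.length + 2 := by
  simp [zeros]; omega

lemma pat_left (w : List (Fin 3)) {o : ℕ} (ho : o < w.length + 1)
    (h : o < (zeros (w.length+1) ++ w ++ zeros (w.length+1)).length) :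
    (zeros (w.length+1) ++ w ++ zeros (w.length+1))[o] = 0 := by
  rw [List.getElem_append_left (by simp [zeros]; omega), List.getElem_append_left (by simp [zeros]; omega)]
  simp [zeros]

lemma pat_right (w : List (Fin 3)) {o : ℕ} (ho : 2*w.length + 1 ≤ o)
    (h : o < (zeros (w.length+1) ++ w ++ zeros (w.length+1)).length) :
    (zeros (w.length+1) ++ w ++ zeros (w.length+1))[o] = 0 := by
  rw [List.getElem_append_right (by simp [zeros]; omega)]
  simp [zeros]

lemma pat_mid (w : List (Fin 3)) {o : ℕ} (h1 : w.length + 1 ≤ o) (h2 : o < 2*w.length + 1)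
    (h : o < (zeros (w.length+1) ++ w ++ zeros (w.length+1)).length) :
    (zeros (w.length+1) ++ w ++ zeros (w.length+1))[o] = w[o - (w.length+1)]'(by omega) := by
  rw [List.getElem_append_left (by simp [zeros]; omega), List.getElem_append_right (by simp [zeros]; omega)]
  simp [zeros]

lemma stable_adj {w : List (Fin 3)} (hw : Stable w) {q : ℕ} (hq : q + 1 < w.length)
    (h1 : w[q]'(by omega) ≠ 0) (h2 : w[q+1]'(by omega) ≠ 0) :
    w[q]'(by omega) = w[q+1]'(by omega) := by
  have hinfix : ∀ a b : Fin 3, w[q]'(by omega) = a → w[q+1]'(by omega) = b → [a, b] <:+: w := by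
    intro a b ha hb
    refine ⟨w.take q, w.drop (q+2), ?_⟩
    have h3 : w.drop q = w[q]'(by omega) :: w.drop (q+1) := List.drop_eq_getElem_cons (by omega)
    have h4 : w.drop (q+1) = w[q+1]'(by omega) :: w.drop (q+2) := List.drop_eq_getElem_cons (by omega)
    have := List.take_append_drop q w
    rw [h3, h4, ha, hb] at this
    simpa using this
  rcases finThree _ h1 with e1 | e1 <;> rcases finThree _ h2 with e2 | e2 <;>
    simp [e1, e2]
  · exact absurd (hinfix 1 2 e1 e2) hw.1
  · exact absurd (hinfix 2 1 e1 e2) hw.2.1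

lemma codeC_pos {u : List (Fin 3)} (hu : u ∈ codeC) : 0 < u.length := by
  rcases hu with h | ⟨w, _, rfl⟩
  · simp [Set.mem_singleton_iff] at h; simp [h]
  · simp [zeros]

lemma codeC_first {u : List (Fin 3)} (hu : u ∈ codeC) (h0 : 0 < u.length) : u[0]'h0 = 0 := by
  rcases hu with h | ⟨w, _, rfl⟩
  · simp [Set.mem_singleton_iff] at h; subst h; rfl
  · exact pat_left w (by omega) _

lemma window {x : ℤ → Fin 3} (hx : x ∈ spaceW) (F : Finset ℤ) :
    ∃ y, IsConcat codeC y ∧ ∀ p ∈ F, y p = x p := by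
  have hU : IsOpen (Set.pi (↑F : Set ℤ) (fun p => {x p})) :=
    isOpen_set_pi F.finite_toSet (fun a _ => isOpen_discrete _)
  have hxU : x ∈ Set.pi (↑F : Set ℤ) (fun p => {x p}) := fun p _ => rfl
  obtain ⟨y, hy1, hy2⟩ := mem_closure_iff.1 hx _ hU hxU
  exact ⟨y, hy2, fun p hp => hy1 p (by simpa using hp)⟩

lemma run_lemma_s17 {x : ℤ → Fin 3} (hx : x ∈ spaceW) {i j : ℤ} {n : ℕ}
    (hn : 1 ≤ n) (hij : j = i + (n:ℤ) + 1) (hxi : x i = 0) (hxj : x j = 0)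
    (hrun : ∀ k, i < k → k < j → x k ≠ 0) :
    (∀ k, i < k → k < j → x k = x (i+1)) ∧
    (x (i+1) = 1 ↔ ((n ∈ wordI ∧ (x (i-(n:ℤ)) = 0 ↔ x (j+(n:ℤ)) = 0)) ∨
      (n ∉ wordI ∧ ¬ (x (i-(n:ℤ)) = 0 ↔ x (j+(n:ℤ)) = 0)))) := by
  obtain ⟨y, ⟨t, ht1, ht2, ht3⟩, hyF⟩ := window hx (Finset.Icc (i - (n:ℤ)) (j + (n:ℤ)))
  have hagree : ∀ p : ℤ, i - (n:ℤ) ≤ p → p ≤ j + (n:ℤ) → y p = x p := by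
    intro p h1 h2; exact hyF p (Finset.mem_Icc.2 ⟨h1, h2⟩)
  have hbd : ∀ k, y (t k) = 0 := by
    intro k
    obtain ⟨u, hu, hlen, hocc⟩ := ht3 k
    have pos := codeC_pos hu
    have h := hocc ⟨0, pos⟩
    simpa [codeC_first hu pos, List.get_eq_getElem] using h
  obtain ⟨k0, hk01, hk02⟩ := ht2 (i+1)
  have hjlt : j - 1 < t (k0 + 1) := by
    by_contra hc
    push_neg at hc
    have h1 : i < t (k0+1) := by omega
    have h2 : t (k0+1) < j := by omega
    have h3 := hrun _ h1 h2
    rw [← hagree _ (by omega) (by omega)] at h3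
    exact h3 (hbd _)
  obtain ⟨u, hu, hlen, hocc⟩ := ht3 k0
  have hx1 : x (i+1) ≠ 0 := hrun _ (by omega) (by omega)
  have hy1 : y (i+1) = x (i+1) := hagree _ (by omega) (by omega)
  rcases hu with h | ⟨w, hw, rfl⟩
  · -- u = [0] : contradiction
    simp only [Set.mem_singleton_iff] at h
    subst h
    simp only [List.length_singleton, Nat.cast_one] at hlen
    have he : i + 1 = t k0 := by omega
    have h0 := hbd k0
    rw [← he, hy1] at h0
    exact absurd h0 hx1
  · have hoccE : ∀ (o : ℕ) (ho : o < (zeros (w.length+1) ++ w ++ zeros (w.length+1)).length),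
        y (t k0 + (o:ℤ)) = (zeros (w.length+1) ++ w ++ zeros (w.length+1))[o]'ho := by
      intro o ho; simpa [List.get_eq_getElem] using hocc ⟨o, ho⟩
    set m := w.length with hm
    rw [pat_len] at hlen
    have hspan : t (k0+1) = t k0 + (3*(m:ℤ)+2) := by push_cast at hlen; omega
    have hz1 : ∀ p, t k0 ≤ p → p ≤ t k0 + (m:ℤ) → y p = 0 := by
      intro p h1 h2
      have ho : ((p - t k0).toNat) < (zeros (m+1) ++ w ++ zeros (m+1)).length := by
        rw [pat_len]; omega
      have he : p = t k0 + (((p - t k0).toNat : ℕ) : ℤ) := by omega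
      rw [he, hoccE _ ho]
      exact pat_left w (by omega) ho
    have hz2 : ∀ p, t k0 + 2*(m:ℤ) + 1 ≤ p → p < t (k0+1) → y p = 0 := by
      intro p h1 h2
      have ho : ((p - t k0).toNat) < (zeros (m+1) ++ w ++ zeros (m+1)).length := by
        rw [pat_len]; omega
      have he : p = t k0 + (((p - t k0).toNat : ℕ) : ℤ) := by omega
      rw [he, hoccE _ ho]
      exact pat_right w (by omega) ho
    have hwv : ∀ (q : ℕ) (hq : q < m), y (t k0 + (m:ℤ) + 1 + q) = w[q]'hq := by
      intro q hq
      have ho : (m + 1 + q) < (zeros (m+1) ++ w ++ zeros (m+1)).length := by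
        rw [pat_len]; omega
      have he : t k0 + (m:ℤ) + 1 + q = t k0 + ((m + 1 + q : ℕ) : ℤ) := by push_cast; ring
      rw [he, hoccE _ ho]
      have := pat_mid w (o := m + 1 + q) (by omega) (by omega) ho
      rw [this]
      congr 1
      omega
    have hmid : ∀ p, t k0 ≤ p → p < t (k0+1) → y p ≠ 0 →
        t k0 + (m:ℤ) + 1 ≤ p ∧ p ≤ t k0 + 2*(m:ℤ) := by
      intro p h1 h2 h3
      constructor
      · by_contra hc; push_neg at hc; exact h3 (hz1 p h1 (by omega))
      · by_contra hc; push_neg at hc; exact h3 (hz2 p (by omega) h2)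
    have hb1 := hmid (i+1) hk01 hk02 (by rw [hy1]; exact hx1)
    have hyj1 : y (j-1) = x (j-1) := hagree _ (by omega) (by omega)
    have hb2 := hmid (j-1) (by omega) (by omega)
      (by rw [hyj1]; exact hrun _ (by omega) (by omega))
    have hnm : n ≤ m := by omega
    have hstep : ∀ p, i < p → p + 1 < j → y (p+1) = y p := by
      intro p hp1 hp2
      have hyp : y p = x p := hagree _ (by omega) (by omega)
      have hyp1 : y (p+1) = x (p+1) := hagree _ (by omega) (by omega)
      have hnz : y p ≠ 0 := by rw [hyp]; exact hrun _ hp1 (by omega)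
      have hnz1 : y (p+1) ≠ 0 := by rw [hyp1]; exact hrun _ (by omega) hp2
      have hm1 := hmid p (by omega) (by omega) hnz
      have hm2 := hmid (p+1) (by omega) (by omega) hnz1
      obtain ⟨q, e1⟩ : ∃ q : ℕ, p = t k0 + (m:ℤ) + 1 + (q:ℤ) :=
        ⟨(p - (t k0 + (m:ℤ) + 1)).toNat, by omega⟩
      have hq2 : q + 1 < m := by omega
      have hq1 : q < m := by omega
      have e2 : p + 1 = t k0 + (m:ℤ) + 1 + ((q + 1 : ℕ) : ℤ) := by push_cast; omega
      have v1 := hwv q hq1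
      rw [← e1] at v1
      have v2 := hwv (q+1) hq2
      rw [← e2] at v2
      rw [v1, v2]
      exact (stable_adj hw hq2 (v1 ▸ hnz) (v2 ▸ hnz1)).symm
    have hconst : ∀ k, i < k → k < j → y k = y (i+1) := by
      have key : ∀ d : ℕ, i + 1 + (d:ℤ) < j → y (i + 1 + (d:ℤ)) = y (i+1) := by
        intro d
        induction d with
        | zero => intro _; norm_num
        | succ d ih =>
          intro hd
          have e : i + 1 + ((d+1 : ℕ):ℤ) = (i + 1 + (d:ℤ)) + 1 := by push_cast; ring
          rw [e, hstep (i+1+(d:ℤ)) (by omega) (by push_cast at hd; omega)]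
          exact ih (by push_cast at hd; omega)
      intro k hk1 hk2
      have e : k = i + 1 + (((k - (i+1)).toNat : ℕ) : ℤ) := by omega
      rw [e]; exact key _ (by omega)
    have hconstx : ∀ k, i < k → k < j → x k = x (i+1) := by
      intro k hk1 hk2
      rw [← hagree k (by omega) (by omega), ← hy1]
      exact hconst k hk1 hk2
    refine ⟨hconstx, ?_⟩
    set x'' : ℤ → Fin 3 := fun p => y (p + (t k0 - 1)) with hx''
    have hocc'' : OccursAt (zeros (w.length+1) ++ w ++ zeros (w.length+1)) x'' 1 := by
      intro o
      have h := hocc o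
      show y (1 + ((o:ℕ):ℤ) + (t k0 - 1)) = _
      rw [show (1 : ℤ) + ((o:ℕ):ℤ) + (t k0 - 1) = t k0 + ((o:ℕ):ℤ) by ring]
      exact h
    have happ := hw.2.2 x'' hocc'' n (y (i+1)) (i - t k0 + 1) (j - t k0 + 1) hn hnm
      (finThree _ (by rw [hy1]; exact hx1))
      (by omega) (by omega) (by omega) (by omega)
      (by show y (i - t k0 + 1 + (t k0 - 1)) = 0
          rw [show i - t k0 + 1 + (t k0 - 1) = i by ring, hagree i (by omega) (by omega)]
          exact hxi)
      (by show y (j - t k0 + 1 + (t k0 - 1)) = 0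
          rw [show j - t k0 + 1 + (t k0 - 1) = j by ring, hagree j (by omega) (by omega)]
          exact hxj)
      (by intro k hk1 hk2
          show y (k + (t k0 - 1)) = y (i+1)
          exact hconst _ (by omega) (by omega))
    have e1 : x'' (i - t k0 + 1 - (n:ℤ)) = x (i - (n:ℤ)) := by
      show y (i - t k0 + 1 - (n:ℤ) + (t k0 - 1)) = _
      rw [show i - t k0 + 1 - (n:ℤ) + (t k0 - 1) = i - (n:ℤ) by ring]
      exact hagree _ le_rfl (by omega)
    have e2 : x'' (j - t k0 + 1 + (n:ℤ)) = x (j + (n:ℤ)) := by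
      show y (j - t k0 + 1 + (n:ℤ) + (t k0 - 1)) = _
      rw [show j - t k0 + 1 + (n:ℤ) + (t k0 - 1) = j + (n:ℤ) by ring]
      exact hagree _ (by omega) le_rfl
    rw [e1, e2, hy1] at happ
    rw [happ]
    constructor
    · rintro (⟨h1, h2⟩ | ⟨h1, h2⟩)
      · exact Or.inl ⟨h1, (J_iff _ _).1 h2⟩
      · exact Or.inr ⟨h1, fun hc => h2 ((J_iff _ _).2 hc)⟩
    · rintro (⟨h1, h2⟩ | ⟨h1, h2⟩)
      · exact Or.inl ⟨h1, (J_iff _ _).2 h2⟩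
      · exact Or.inr ⟨h1, fun hc => h2 ((J_iff _ _).1 hc)⟩
lemma determined : ∀ x ∈ spaceW0, ∀ x' ∈ spaceW0,
    {i : ℤ | x i = 0} = {i : ℤ | x' i = 0} → x = x' := by
  intro x hx x' hx' hZ
  have hzz : ∀ p, x p = 0 ↔ x' p = 0 := fun p => Set.ext_iff.1 hZ p
  funext i0
  by_cases h0 : x i0 = 0
  · rw [h0, ((hzz i0).1 h0)]
  · have h0' : x' i0 ≠ 0 := fun hc => h0 ((hzz i0).2 hc)
    obtain ⟨lo, hlo⟩ := (hx.2).bddBelow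
    obtain ⟨hi, hhi⟩ := (hx.2).bddAbove
    obtain ⟨i, ⟨hi1, hi2⟩, hmax⟩ := Int.exists_greatest_of_bdd
      (P := fun z => z < i0 ∧ x z = 0) ⟨i0, fun z hz => le_of_lt hz.1⟩
      ⟨lo - 1, by
        refine ⟨?_, ?_⟩
        · have : lo ≤ i0 := hlo h0
          omega
        · by_contra hc
          have := hlo hc
          omega⟩
    obtain ⟨j, ⟨hj1, hj2⟩, hminP⟩ := Int.exists_least_of_bdd
      (P := fun z => i0 < z ∧ x z = 0) ⟨i0, fun z hz => le_of_lt hz.1⟩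
      ⟨hi + 1, by
        refine ⟨?_, ?_⟩
        · have : i0 ≤ hi := hhi h0
          omega
        · by_contra hc
          have := hhi hc
          omega⟩
    have hrun : ∀ k, i < k → k < j → x k ≠ 0 := by
      intro k hk1 hk2 hk0
      rcases lt_trichotomy k i0 with h | h | h
      · have := hmax k ⟨h, hk0⟩; omega
      · subst h; exact h0 hk0
      · have := hminP k ⟨h, hk0⟩; omega
    obtain ⟨nn, hnn⟩ : ∃ nn : ℕ, j = i + (nn:ℤ) + 1 := ⟨(j - i - 1).toNat, by omega⟩
    have hn1 : 1 ≤ nn := by omega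
    obtain ⟨hc1, hiff1⟩ := run_lemma_s17 hx.1 hn1 hnn hi2 hj2 hrun
    have hrun' : ∀ k, i < k → k < j → x' k ≠ 0 := fun k h1 h2 hc => hrun k h1 h2 ((hzz k).2 hc)
    obtain ⟨hc1', hiff1'⟩ := run_lemma_s17 hx'.1 hn1 hnn ((hzz i).1 hi2) ((hzz j).1 hj2) hrun'
    have e0 : x i0 = x (i+1) := hc1 i0 hi1 hj1
    have e0' : x' i0 = x' (i+1) := hc1' i0 hi1 hj1
    have hone : x (i+1) = 1 ↔ x' (i+1) = 1 := by
      rw [hiff1, hiff1']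
      simp only [hzz]
    have hnz : x (i+1) ≠ 0 := hrun _ (by omega) (by omega)
    have hnz' : x' (i+1) ≠ 0 := hrun' _ (by omega) (by omega)
    rw [e0, e0']
    rcases finThree _ hnz with ha | ha <;> rcases finThree _ hnz' with hb | hb
    · rw [ha, hb]
    · exact absurd (hone.1 ha) (by rw [hb]; decide)
    · exact absurd (hone.2 hb) (by rw [ha]; decide)
    · rw [ha, hb]
lemma approx_concat {x : ℤ → Fin 3} {t : ℤ → ℤ} (ht1 : StrictMono t)
    (ht3 : ∀ j : ℤ, ∃ w ∈ codeC, t (j + 1) = t j + w.length ∧ OccursAt w x (t j))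
    (N : ℕ) :
    IsConcat codeC (fun p => if t (-(N:ℤ)) ≤ p ∧ p < t (N:ℤ) then x p else 0) := by
  set s : ℤ → ℤ := fun j => if j < -(N:ℤ) then t (-(N:ℤ)) + (j + N)
    else if j ≤ (N:ℤ) then t j else t (N:ℤ) + (j - N) with hsdef
  have hNN : -(N:ℤ) ≤ (N:ℤ) := by omega
  have hs1 : ∀ j, j < -(N:ℤ) → s j = t (-(N:ℤ)) + (j + N) := by
    intro j h; simp only [hsdef]; rw [if_pos h]
  have hs2 : ∀ j, -(N:ℤ) ≤ j → j ≤ (N:ℤ) → s j = t j := by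
    intro j h h'; simp only [hsdef]; rw [if_neg (by omega), if_pos h']
  have hs3 : ∀ j, (N:ℤ) < j → s j = t (N:ℤ) + (j - N) := by
    intro j h; simp only [hsdef]; rw [if_neg (by omega), if_neg (by omega)]
  have hs3' : ∀ j, (N:ℤ) ≤ j → s j = t (N:ℤ) + (j - N) := by
    intro j h
    rcases eq_or_lt_of_le h with h' | h'
    · rw [hs2 j (by omega) (by omega), ← h']
      omega
    · exact hs3 j h'
  have hsm : StrictMono s := by
    apply strictMono_int_of_lt_succ
    intro j
    rcases lt_trichotomy (j+1) (-(N:ℤ)) with h | h | h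
    · rw [hs1 j (by omega), hs1 (j+1) h]; omega
    · rw [hs1 j (by omega), h, hs2 _ le_rfl hNN]; omega
    · rcases le_or_gt (j+1) (N:ℤ) with h2 | h2
      · rw [hs2 j (by omega) (by omega), hs2 (j+1) (by omega) h2]
        exact ht1 (by omega)
      · rcases le_or_gt j (N:ℤ) with h3 | h3
        · rw [hs2 j (by omega) h3, hs3 (j+1) h2]
          have : j = (N:ℤ) := by omega
          rw [this]
          omega
        · rw [hs3 j h3, hs3 (j+1) (by omega)]; omega
  refine ⟨s, hsm, fun n => sm_cover hsm n, ?_⟩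
  intro j
  rcases lt_or_ge j (-(N:ℤ)) with h | h
  · refine ⟨[0], Set.mem_union_left _ rfl, ?_, ?_⟩
    · rcases lt_or_eq_of_le (show j + 1 ≤ -(N:ℤ) by omega) with h' | h'
      · rw [hs1 j h, hs1 (j+1) h']; simp; omega
      · rw [hs1 j h, h', hs2 _ le_rfl hNN]; simp; omega
    · intro k
      have hk0 : (k : ℕ) = 0 := Nat.lt_one_iff.1 (by simpa using k.isLt)
      have hkz : ((k:ℕ):ℤ) = 0 := by rw [hk0]; norm_num
      have hlt : s j + ((k:ℕ):ℤ) < t (-(N:ℤ)) := by rw [hkz, hs1 j h]; omega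
      show (if t (-(N:ℤ)) ≤ s j + ((k:ℕ):ℤ) ∧ s j + ((k:ℕ):ℤ) < t (N:ℤ) then x _ else 0) = _
      rw [if_neg (by omega)]
      have hke : k = ⟨0, by simp⟩ := Fin.ext hk0
      rw [hke]
      rfl
  · rcases lt_or_ge j (N:ℤ) with h2 | h2
    · obtain ⟨u, hu, hlen, hocc⟩ := ht3 j
      refine ⟨u, hu, ?_, ?_⟩
      · rw [hs2 j h (by omega), hs2 (j+1) (by omega) (by omega)]
        exact hlen
      · intro k
        have hk : ((k:ℕ):ℤ) < (u.length : ℤ) := by exact_mod_cast k.isLt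
        have hcond : t (-(N:ℤ)) ≤ s j + ((k:ℕ):ℤ) ∧ s j + ((k:ℕ):ℤ) < t (N:ℤ) := by
          rw [hs2 j h (by omega)]
          constructor
          · have := ht1.monotone h
            omega
          · have h4 : t (j+1) ≤ t (N:ℤ) := ht1.monotone (by omega)
            omega
        show (if t (-(N:ℤ)) ≤ s j + ((k:ℕ):ℤ) ∧ s j + ((k:ℕ):ℤ) < t (N:ℤ) then x (s j + ((k:ℕ):ℤ)) else 0) = _
        rw [if_pos hcond, hs2 j h (by omega)]
        exact hocc k
    · refine ⟨[0], Set.mem_union_left _ rfl, ?_, ?_⟩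
      · rw [hs3' j h2, hs3' (j+1) (by omega)]; simp; omega
      · intro k
        have hk0 : (k : ℕ) = 0 := Nat.lt_one_iff.1 (by simpa using k.isLt)
        have hkz : ((k:ℕ):ℤ) = 0 := by rw [hk0]; norm_num
        have hge : t (N:ℤ) ≤ s j + ((k:ℕ):ℤ) := by rw [hkz, hs3' j h2]; omega
        show (if t (-(N:ℤ)) ≤ s j + ((k:ℕ):ℤ) ∧ s j + ((k:ℕ):ℤ) < t (N:ℤ) then x _ else 0) = _
        rw [if_neg (by omega)]
        have hke : k = ⟨0, by simp⟩ := Fin.ext hk0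
        rw [hke]
        rfl

lemma approx_mem {x : ℤ → Fin 3} {t : ℤ → ℤ} (ht1 : StrictMono t)
    (ht3 : ∀ j : ℤ, ∃ w ∈ codeC, t (j + 1) = t j + w.length ∧ OccursAt w x (t j))
    (N : ℕ) :
    (fun p => if t (-(N:ℤ)) ≤ p ∧ p < t (N:ℤ) then x p else 0) ∈ spaceW0 := by
  refine ⟨subset_closure (approx_concat ht1 ht3 N), ?_⟩
  apply Set.Finite.subset (Set.finite_Icc (t (-(N:ℤ))) (t (N:ℤ)))
  intro p hp
  simp only [Set.mem_setOf_eq] at hp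
  by_cases hc : t (-(N:ℤ)) ≤ p ∧ p < t (N:ℤ)
  · exact Set.mem_Icc.2 ⟨hc.1, hc.2.le⟩
  · exact absurd (if_neg hc) hp

lemma dense0 : closure spaceW0 = spaceW := by
  apply Set.Subset.antisymm
  · exact closure_minimal (fun z hz => hz.1) isClosed_closure
  · have hsub : {x : ℤ → Fin 3 | IsConcat codeC x} ⊆ closure spaceW0 := by
      intro x hxc
      obtain ⟨t, ht1, ht2, ht3⟩ := hxc
      rw [mem_closure_iff]
      intro o ho hxo
      obtain ⟨I, u, hIu, hIsub⟩ := isOpen_pi_iff.1 ho x hxo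
      obtain ⟨N, hN⟩ : ∃ N : ℕ, ∀ p ∈ I, t (-(N:ℤ)) ≤ p ∧ p < t (N:ℤ) := by
        have hB : ∀ p ∈ I, p.natAbs ≤ I.sup (fun q => q.natAbs) :=
          fun p hp => Finset.le_sup (f := fun q : ℤ => q.natAbs) hp
        refine ⟨(max (t 0 + ((I.sup (fun q => q.natAbs) : ℕ) : ℤ))
          (((I.sup (fun q => q.natAbs) : ℕ) : ℤ) + 1 - t 0)).toNat, ?_⟩
        set M : ℤ := max (t 0 + ((I.sup (fun q => q.natAbs) : ℕ) : ℤ))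
          (((I.sup (fun q => q.natAbs) : ℕ) : ℤ) + 1 - t 0) with hMdef
        intro p hp
        have h1 := hB p hp
        have hM1 : t 0 + ((I.sup (fun q => q.natAbs) : ℕ) : ℤ) ≤ M := le_max_left _ _
        have hM2 : ((I.sup (fun q => q.natAbs) : ℕ) : ℤ) + 1 - t 0 ≤ M := le_max_right _ _
        have hM3 : M ≤ ((M.toNat : ℕ) : ℤ) := Int.self_le_toNat _
        have h3 := sm_le ht1 (show -(((M.toNat : ℕ)):ℤ) ≤ 0 by omega)
        have h4 := sm_le ht1 (show (0:ℤ) ≤ ((M.toNat : ℕ):ℤ) by omega)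
        omega
      refine ⟨_, Set.mem_inter (hIsub ?_) (approx_mem ht1 ht3 N)⟩
      intro p hp
      have hp' : p ∈ I := hp
      have := hN p hp'
      show (if t (-(N:ℤ)) ≤ p ∧ p < t (N:ℤ) then x p else 0) ∈ u p
      rw [if_pos this]
      exact (hIu p hp').2
    calc spaceW = closure {x | IsConcat codeC x} := rfl
    _ ⊆ closure (closure spaceW0) := closure_mono hsub
    _ = closure spaceW0 := closure_closure

/-- `W₀` is dense in `W`, and a point of `W₀` is determined by its set of zero
coordinates: if `x, x' ∈ W₀` and `Z(x) = Z(x')` then `x = x'`. -/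
theorem W0_dense_and_determined :
    closure spaceW0 = spaceW ∧
    ∀ x ∈ spaceW0, ∀ x' ∈ spaceW0,
      {i : ℤ | x i = 0} = {i : ℤ | x' i = 0} → x = x' :=
  ⟨dense0, determined⟩
end
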